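/- For every R' ∈ [0,1) there exists a positive integer M such that for all positive integers j ≤ k with k even, k > M and R_o := 1 - j/k ≤ R', there exists δ' ∈ (0, H^{-1}((1-R_o)·ln 2)) such that: (i) w^{ub}(0) ≤ 0; (ii) w^{ub}(a) < 0 for all a ∈ (0, δ']; (iii) w^{ub}(a) ≤ H(a) - (1-R_o)·ln 2 for all a ∈ (δ', 1/2]. -/

import Mathlib

/-- Binary entropy function with natural logarithms (`Real.log 0 = 0` gives `H 0 = H 1 = 0`). -/
noncomputable def H (a : ℝ) : ℝ := -a * Real.log a - (1 - a) * Real.log (1 - a)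

/-- The inverse of the binary entropy function: the unique `a ∈ [0, 1/2]` with `H a = y`. -/
noncomputable def Hinv (y : ℝ) : ℝ :=
  sInf {a : ℝ | a ∈ Set.Icc (0 : ℝ) (1 / 2) ∧ H a = y}

/-- Asymptotic growth rate of the average weight distribution of Gallager's
`(n, j, k)` LDPC ensemble. -/
noncomputable def wo (j k : ℕ) (a : ℝ) : ℝ :=
  ((j : ℝ) / k) *
    sInf {y : ℝ | ∃ x : ℝ, 0 < x ∧
      y = Real.log (((1 + x) ^ k + (1 - x) ^ k) / (2 * x ^ (a * (k : ℝ))))} -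
  ((j : ℝ) - 1) * H a

/-- Upper bound on the asymptotic growth rate of the average weight distribution of the
LDPC-GM ensemble (outer Gallager `(n, j, k)` LDPC code, inner rate-1 `(k, k)` regular
LDGM code). -/
noncomputable def wub (j k : ℕ) (a : ℝ) : ℝ :=
  H a + sSup {y : ℝ | ∃ b : ℝ, b ∈ Set.Icc (a / k) (1 - a / k) ∧
    y = wo j k b + a * Real.log (1 - (1 - 2 * b) ^ k)
        + (1 - a) * Real.log (1 + (1 - 2 * b) ^ k) - Real.log 2}

set_option maxHeartbeats 1000000

open Real Set

namespace Aux5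

lemma log2_pos : (0:ℝ) < Real.log 2 := Real.log_pos one_lt_two

lemma log2_lt : Real.log 2 < 0.6932 := lt_trans Real.log_two_lt_d9 (by norm_num)

lemma log2_gt : (0.69:ℝ) < Real.log 2 := lt_trans (by norm_num) Real.log_two_gt_d9

/-- log(1-x) ≤ -x for x < 1 -/
lemma log_one_sub_le {x : ℝ} (h : x < 1) : Real.log (1 - x) ≤ -x := by
  have := Real.log_le_sub_one_of_pos (x := 1 - x) (by linarith)
  linarith

/-- exp two-point convexity -/
lemma exp_cvx2 {p q u : ℝ} (hu0 : 0 ≤ u) (hu1 : u ≤ 1) :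
    Real.exp ((1-u)*p + u*q) ≤ (1-u)*Real.exp p + u*Real.exp q := by
  have := convexOn_exp.2 (Set.mem_univ p) (Set.mem_univ q) (by linarith : (0:ℝ) ≤ 1 - u) hu0
    (by ring)
  simpa [smul_eq_mul] using this

lemma exp_neg_two_le_half : Real.exp (-2 : ℝ) ≤ 1/2 := by
  have h2 : (2:ℝ) ≤ Real.exp 2 := by
    have := Real.add_one_le_exp (2:ℝ); linarith
  have h3 : Real.exp (-2:ℝ) * Real.exp 2 = 1 := by
    rw [← Real.exp_add]; norm_num
  nlinarith [Real.exp_pos (-2:ℝ)]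

/-- exp(-2u) ≤ 1 - u/2 for u ∈ [0,1] -/
lemma exp_neg_two_mul_le {u : ℝ} (hu0 : 0 ≤ u) (hu1 : u ≤ 1) :
    Real.exp (-(2*u)) ≤ 1 - u/2 := by
  have h := exp_cvx2 (p := 0) (q := -2) hu0 hu1
  have h2 : Real.exp (-2:ℝ) ≤ 1/2 := exp_neg_two_le_half
  have heq : (1-u)*(0:ℝ) + u*(-2) = -(2*u) := by ring
  rw [heq] at h
  rw [Real.exp_zero] at h
  nlinarith [Real.exp_pos (-2:ℝ)]

/-- λ log 2 ≤ log(1+λ) for λ ∈ [0,1] -/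
lemma mul_log_two_le_log_one_add {l : ℝ} (h0 : 0 ≤ l) (h1 : l ≤ 1) :
    l * Real.log 2 ≤ Real.log (1 + l) := by
  have h := exp_cvx2 (p := 0) (q := Real.log 2) h0 h1
  rw [Real.exp_zero, Real.exp_log two_pos] at h
  have h2 : Real.exp ((1-l)*0 + l * Real.log 2) ≤ 1 + l := by
    calc Real.exp ((1-l)*0 + l * Real.log 2) ≤ (1-l)*1 + l*2 := h
    _ = 1 + l := by ring
  have h3 : (1-l)*0 + l * Real.log 2 = l * Real.log 2 := by ring
  rw [h3] at h2
  calc l * Real.log 2 = Real.log (Real.exp (l * Real.log 2)) := (Real.log_exp _).symm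
  _ ≤ Real.log (1 + l) := Real.log_le_log (Real.exp_pos _) h2

/-- generic monotonicity helper on Ici -/
lemma mono_Ici {f f' : ℝ → ℝ} {a : ℝ}
    (hder : ∀ x ∈ Ici a, HasDerivAt f (f' x) x)
    (hpos : ∀ x ∈ Ioi a, 0 ≤ f' x) : MonotoneOn f (Ici a) := by
  apply monotoneOn_of_deriv_nonneg (convex_Ici a)
  · exact fun x hx => (hder x hx).continuousAt.continuousWithinAt
  · intro x hx
    rw [interior_Ici] at hx
    exact (hder x (mem_Ici.mpr (le_of_lt (mem_Ioi.mp hx)))).differentiableAt.differentiableWithinAt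
  · intro x hx
    rw [interior_Ici] at hx
    rw [(hder x (mem_Ici.mpr (le_of_lt (mem_Ioi.mp hx)))).deriv]
    exact hpos x hx

/-- log z ≤ (z - z⁻¹)/2 for z ≥ 1 -/
lemma log_le_half_sub_inv {z : ℝ} (hz : 1 ≤ z) : Real.log z ≤ (z - z⁻¹)/2 := by
  set f : ℝ → ℝ := fun x => (x - x⁻¹)/2 - Real.log x with hf
  have key : MonotoneOn f (Ici 1) := by
    apply mono_Ici (f' := fun x => (1 + (x^2)⁻¹)/2 - x⁻¹)
    · intro x hx
      have hx0 : x ≠ 0 := by simp only [mem_Ici] at hx; positivity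
      have h1 : HasDerivAt (fun x : ℝ => (x - x⁻¹)/2) ((1 - -(x^2)⁻¹)/2) x :=
        ((hasDerivAt_id x).sub (hasDerivAt_inv hx0)).div_const 2
      have h2 : HasDerivAt Real.log x⁻¹ x := Real.hasDerivAt_log hx0
      have := h1.sub h2
      refine this.congr_deriv ?_
      ring
    · intro x hx
      simp only [mem_Ioi] at hx
      have hx0 : 0 < x := by linarith
      have h : (1 + (x^2)⁻¹)/2 - x⁻¹ = (1 - x⁻¹)^2/2 := by
        rw [← inv_pow]; ring
      rw [h]
      positivity
  have h1 : f 1 ≤ f z := key (by simp) hz hz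
  have : f 1 = 0 := by simp [hf]
  rw [this] at h1
  simp only [hf] at h1
  linarith

/-- (1-a) log(1-a) ≥ -a + a²/2 for a ∈ [0,1) -/
lemma one_sub_mul_log_ge {a : ℝ} (h0 : 0 ≤ a) (h1 : a < 1) :
    -a + a^2/2 ≤ (1-a) * Real.log (1-a) := by
  have hz : 1 ≤ (1-a)⁻¹ := by
    rw [le_inv_comm₀ one_pos (by linarith)]; linarith
  have h := log_le_half_sub_inv hz
  rw [Real.log_inv, inv_inv] at h
  have h2 : -Real.log (1-a) ≤ ((1-a)⁻¹ - (1-a))/2 := h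
  have h3 : (1-a) * ((1-a)⁻¹ - (1-a)) = 1 - (1-a)^2 := by
    have : (1-a) ≠ 0 := by linarith
    field_simp
  nlinarith [h2, (by linarith : (0:ℝ) < 1 - a)]

/-- 2s ≤ log(1+s) - log(1-s) for s ∈ [0,1) -/
lemma two_mul_le_log_div {s : ℝ} (h0 : 0 ≤ s) (h1 : s < 1) :
    2*s ≤ Real.log (1+s) - Real.log (1-s) := by
  have key : MonotoneOn (fun x : ℝ => (1+x) - Real.exp (2*x) * (1-x)) (Ici 0) := by
    apply mono_Ici (f' := fun x => 1 - Real.exp (2*x)*(1 - 2*x))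
    · intro x _
      have h1 : HasDerivAt (fun x : ℝ => Real.exp (2*x)) (Real.exp (2*x) * 2) x := by
        have h0 : HasDerivAt (fun x : ℝ => 2*x) 2 x := by
          simpa using (hasDerivAt_id x).const_mul 2
        exact (Real.hasDerivAt_exp (2*x)).comp x h0
      have h2 : HasDerivAt (fun x : ℝ => 1 - x) (-1) x := by
        simpa using (hasDerivAt_id x).const_sub (1:ℝ)
      have h3 := h1.mul h2
      have h4 := ((hasDerivAt_id x).const_add 1).sub h3
      refine h4.congr_deriv ?_
      ring
    · intro x hx
      simp only [mem_Ioi] at hx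
      have : 1 - 2*x ≤ Real.exp (-(2*x)) := by
        have := Real.add_one_le_exp (-(2*x)); linarith
      have h5 : Real.exp (2*x) * (1 - 2*x) ≤ Real.exp (2*x) * Real.exp (-(2*x)) :=
        mul_le_mul_of_nonneg_left this (Real.exp_pos _).le
      rw [← Real.exp_add] at h5
      simp only [add_neg_cancel, Real.exp_zero] at h5
      linarith
  have h2 := key (self_mem_Ici) (mem_Ici.mpr h0) h0
  simp only [mul_zero, Real.exp_zero, one_mul] at h2
  have h3 : Real.exp (2*s) * (1-s) ≤ 1 + s := by linarith
  have h4 : 0 < 1 - s := by linarith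
  have h5 : Real.log (Real.exp (2*s) * (1-s)) ≤ Real.log (1+s) :=
    Real.log_le_log (by positivity) h3
  rw [Real.log_mul (Real.exp_pos _).ne' h4.ne', Real.log_exp] at h5
  linarith

/-- s² ≤ (1+s)log(1+s) + (1-s)log(1-s) on [0,1) -/
lemma sq_le_entropy_sum {s : ℝ} (h0 : 0 ≤ s) (h1 : s < 1) :
    s^2 ≤ (1+s)*Real.log (1+s) + (1-s)*Real.log (1-s) := by
  set g : ℝ → ℝ := fun x => (1+x)*Real.log (1+x) + (1-x)*Real.log (1-x) - x^2 with hg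
  have key : MonotoneOn g (Ico 0 1) := by
    apply monotoneOn_of_deriv_nonneg (convex_Ico 0 1)
    · apply ContinuousOn.sub ?_ (by fun_prop)
      apply ContinuousOn.add
      · apply ContinuousOn.mul (by fun_prop)
        apply ContinuousOn.log (by fun_prop)
        intro x hx; simp only [mem_Ico] at hx; intro hc; linarith
      · apply ContinuousOn.mul (by fun_prop)
        apply ContinuousOn.log (by fun_prop)
        intro x hx; simp only [mem_Ico] at hx; intro hc; linarith
    · rw [interior_Ico]
      intro x hx
      simp only [mem_Ioo] at hx
      have hd : HasDerivAt g (Real.log (1+x) - Real.log (1-x) - 2*x) x := by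
        have d1 : HasDerivAt (fun x : ℝ => 1 + x) 1 x := by
          simpa using (hasDerivAt_id x).const_add 1
        have d2 : HasDerivAt (fun x : ℝ => 1 - x) (-1) x := by
          simpa using (hasDerivAt_id x).const_sub (1:ℝ)
        have l1 : HasDerivAt (fun x : ℝ => Real.log (1+x)) (1/(1+x)) x := by
          exact d1.log (by linarith : (1:ℝ)+x ≠ 0)
        have l2 : HasDerivAt (fun x : ℝ => Real.log (1-x)) (-(1-x)⁻¹) x := by
          convert d2.log (by linarith : (1:ℝ)-x ≠ 0) using 1
          ring
        have m1 := d1.mul l1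
        have m2 := d2.mul l2
        have hx2 : HasDerivAt (fun x : ℝ => x^2) (2*x) x := by
          simpa [two_mul] using hasDerivAt_pow 2 x
        have := (m1.add m2).sub hx2
        refine this.congr_deriv ?_
        have h1x : (1:ℝ)+x ≠ 0 := by linarith
        have h2x : (1:ℝ)-x ≠ 0 := by linarith
        field_simp
        ring
      exact hd.differentiableAt.differentiableWithinAt
    · rw [interior_Ico]
      intro x hx
      simp only [mem_Ioo] at hx
      have hd : HasDerivAt g (Real.log (1+x) - Real.log (1-x) - 2*x) x := by
        have d1 : HasDerivAt (fun x : ℝ => 1 + x) 1 x := by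
          simpa using (hasDerivAt_id x).const_add 1
        have d2 : HasDerivAt (fun x : ℝ => 1 - x) (-1) x := by
          simpa using (hasDerivAt_id x).const_sub (1:ℝ)
        have l1 : HasDerivAt (fun x : ℝ => Real.log (1+x)) (1/(1+x)) x := by
          exact d1.log (by linarith : (1:ℝ)+x ≠ 0)
        have l2 : HasDerivAt (fun x : ℝ => Real.log (1-x)) (-(1-x)⁻¹) x := by
          convert d2.log (by linarith : (1:ℝ)-x ≠ 0) using 1
          ring
        have m1 := d1.mul l1
        have m2 := d2.mul l2
        have hx2 : HasDerivAt (fun x : ℝ => x^2) (2*x) x := by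
          simpa [two_mul] using hasDerivAt_pow 2 x
        have := (m1.add m2).sub hx2
        refine this.congr_deriv ?_
        have h1x : (1:ℝ)+x ≠ 0 := by linarith
        have h2x : (1:ℝ)-x ≠ 0 := by linarith
        field_simp
        ring
      rw [hd.deriv]
      have := two_mul_le_log_div (le_of_lt hx.1) hx.2
      linarith
  have h2 := key (by simp [mem_Ico]) (by simp [mem_Ico]; exact ⟨h0, h1⟩) h0
  simp only [hg] at h2
  norm_num at h2
  linarith

/-! ### H lemmas -/

lemma H_eq_binEntropy (a : ℝ) : H a = Real.binEntropy a := by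
  simp only [H, Real.binEntropy, Real.log_inv]
  ring

lemma H_zero : H 0 = 0 := by simp [H]

lemma H_one : H 1 = 0 := by simp [H]

lemma H_half : H (1/2) = Real.log 2 := by
  rw [H_eq_binEntropy, show (1/2:ℝ) = 2⁻¹ by norm_num, Real.binEntropy_two_inv]

lemma H_symm (b : ℝ) : H (1 - b) = H b := by
  simp only [H]
  ring_nf

lemma H_nonneg {a : ℝ} (h0 : 0 ≤ a) (h1 : a ≤ 1) : 0 ≤ H a := by
  rw [H_eq_binEntropy]; exact Real.binEntropy_nonneg h0 h1

lemma H_le_log_two (a : ℝ) : H a ≤ Real.log 2 := by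
  rw [H_eq_binEntropy]; exact Real.binEntropy_le_log_two

lemma H_mono : MonotoneOn H (Icc (0:ℝ) (1/2)) := by
  intro x hx y hy hxy
  rw [H_eq_binEntropy, H_eq_binEntropy]
  have h2 : (1/2 : ℝ) = 2⁻¹ := by norm_num
  rw [h2] at hx hy
  rcases eq_or_lt_of_le hxy with h | h
  · rw [h]
  · exact (Real.binEntropy_strictMonoOn hx hy h).le

lemma H_strict_mono {x y : ℝ} (hx : x ∈ Icc (0:ℝ) (1/2)) (hy : y ∈ Icc (0:ℝ) (1/2))
    (h : x < y) : H x < H y := by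
  rw [H_eq_binEntropy, H_eq_binEntropy]
  have h2 : (1/2 : ℝ) = 2⁻¹ := by norm_num
  rw [h2] at hx hy
  exact Real.binEntropy_strictMonoOn hx hy h

/-- H a ≤ a(1 - log a) for 0 < a ≤ 1 -/
lemma H_le_linear {a : ℝ} (h0 : 0 < a) (h1 : a ≤ 1) : H a ≤ a * (1 - Real.log a) := by
  rcases eq_or_lt_of_le h1 with h | h
  · subst h; simp [H_one, Real.log_one]
  · have ha1 : (0:ℝ) < 1 - a := by linarith
    have hlog := Real.log_le_sub_one_of_pos (x := (1-a)⁻¹) (by positivity)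
    rw [Real.log_inv] at hlog
    -- hlog : -log(1-a) ≤ (1-a)⁻¹ - 1
    have h3 : -(1-a)*Real.log (1-a) ≤ a := by
      have h4 : (1-a) * ((1-a)⁻¹ - 1) = a := by field_simp; ring
      nlinarith [mul_le_mul_of_nonneg_left hlog ha1.le]
    simp only [H]
    nlinarith

/-- H b ≥ -b log b + b/2 for 0 < b ≤ 1/2 -/
lemma H_ge_linear {b : ℝ} (h0 : 0 < b) (h1 : b ≤ 1/2) :
    -b * Real.log b + b/2 ≤ H b := by
  have hl : Real.log (1 - b) ≤ -b := log_one_sub_le (by linarith)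
  have h2 : -(1-b)*Real.log (1-b) ≥ (1-b)*b := by nlinarith
  simp only [H]
  nlinarith

/-- H((1-s)/2) ≤ log 2 - s²/2 for s ∈ [0,1) -/
lemma H_quad {s : ℝ} (h0 : 0 ≤ s) (h1 : s < 1) :
    H ((1-s)/2) ≤ Real.log 2 - s^2/2 := by
  have hs := sq_le_entropy_sum h0 h1
  have e1 : Real.log ((1-s)/2) = Real.log (1-s) - Real.log 2 :=
    Real.log_div (by linarith) two_ne_zero
  have e2 : Real.log (1 - (1-s)/2) = Real.log (1+s) - Real.log 2 := by
    have : 1 - (1-s)/2 = (1+s)/2 := by ring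
    rw [this]
    exact Real.log_div (by linarith) two_ne_zero
  simp only [H, e1, e2]
  nlinarith

/-- mono of b(1 - log b) on (0,1] -/
lemma blog_mono {b B : ℝ} (h0 : 0 < b) (h1 : b ≤ B) (h2 : B ≤ 1) :
    b * (1 - Real.log b) ≤ B * (1 - Real.log B) := by
  have hB : 0 < B := lt_of_lt_of_le h0 h1
  have key : Real.log b = Real.log B + Real.log (b/B) := by
    rw [← Real.log_mul hB.ne' (by positivity)]
    congr 1
    field_simp
  have h3 : b * Real.log (B/b) ≤ B - b := by
    have := Real.log_le_sub_one_of_pos (x := B/b) (by positivity)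
    have h4 : b * (B/b - 1) = B - b := by field_simp
    nlinarith
  have h5 : Real.log (b/B) = - Real.log (B/b) := by
    rw [← Real.log_inv]
    congr 1
    field_simp
  have h6 : Real.log B ≤ 0 := Real.log_nonpos hB.le h2
  nlinarith [key, h3, h5]

/-- mono of u log(1/u): a log(1/a) ≤ u log(1/u) for 0 < a ≤ u ≤ e⁻¹ -/
lemma ulog_mono {a u : ℝ} (h0 : 0 < a) (h1 : a ≤ u) (h2 : u ≤ Real.exp (-1)) :
    -a * Real.log a ≤ -u * Real.log u := by
  have hu : 0 < u := lt_of_lt_of_le h0 h1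
  have hlogu : Real.log u ≤ -1 := by
    calc Real.log u ≤ Real.log (Real.exp (-1)) := Real.log_le_log hu h2
    _ = -1 := Real.log_exp _
  have key : a * Real.log (a/u) ≥ a - u := by
    have := Real.log_le_sub_one_of_pos (x := u/a) (by positivity)
    have h5 : Real.log (a/u) = - Real.log (u/a) := by
      rw [← Real.log_inv]; congr 1; field_simp
    have h4 : a * (u/a - 1) = u - a := by field_simp
    nlinarith
  have h6 : Real.log (a/u) = Real.log a - Real.log u := Real.log_div h0.ne' hu.ne'
  nlinarith [key, h6, (by linarith : 0 ≤ u - a)]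

/-! ### Jensen for log -/

lemma log_jensen2 {w1 w2 x1 x2 : ℝ} (hw1 : 0 < w1) (hw2 : 0 < w2)
    (hx1 : 0 < x1) (hx2 : 0 < x2) :
    w1 * Real.log x1 + w2 * Real.log x2 ≤
      (w1 + w2) * Real.log ((w1*x1 + w2*x2)/(w1+w2)) := by
  set m := (w1*x1 + w2*x2)/(w1+w2) with hm
  have hmpos : 0 < m := by positivity
  have h1 : Real.log x1 - Real.log m ≤ x1/m - 1 := by
    have := Real.log_le_sub_one_of_pos (x := x1/m) (by positivity)
    rwa [Real.log_div hx1.ne' hmpos.ne'] at this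
  have h2 : Real.log x2 - Real.log m ≤ x2/m - 1 := by
    have := Real.log_le_sub_one_of_pos (x := x2/m) (by positivity)
    rwa [Real.log_div hx2.ne' hmpos.ne'] at this
  have hmm : w1*x1 + w2*x2 = (w1+w2)*m := by
    rw [hm]; field_simp
  have h4 : w1*(x1/m) + w2*(x2/m) = w1+w2 := by
    have : w1*(x1/m) + w2*(x2/m) = (w1*x1 + w2*x2)/m := by ring
    rw [this, hmm, mul_div_assoc, div_self hmpos.ne', mul_one]
  nlinarith [mul_le_mul_of_nonneg_left h1 hw1.le, mul_le_mul_of_nonneg_left h2 hw2.le]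

/-- Jensen max: (c-a)log(1+t) + a log(1-t) ≤ c log 2 - c H(a/c) -/
lemma jensen_max {a c t : ℝ} (ha : 0 < a) (hac : a < c) (ht0 : 0 ≤ t) (ht1 : t < 1) :
    (c-a) * Real.log (1+t) + a * Real.log (1-t) ≤ c * Real.log 2 - c * H (a/c) := by
  have hc : 0 < c := lt_trans ha hac
  have hca : 0 < c - a := by linarith
  set x1 := c*(1+t)/(2*(c-a)) with hx1
  set x2 := c*(1-t)/(2*a) with hx2
  have hx1p : 0 < x1 := by positivity
  have hx2p : 0 < x2 := by
    apply div_pos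
    · nlinarith
    · positivity
  have hJ := log_jensen2 hca ha hx1p hx2p
  have hmid : ((c-a)*x1 + a*x2)/((c-a)+a) = 1 := by
    rw [hx1, hx2]
    field_simp
    ring
  rw [hmid, Real.log_one, mul_zero] at hJ
  have e1 : Real.log x1 = Real.log c + Real.log (1+t) - Real.log 2 - Real.log (c-a) := by
    rw [hx1, Real.log_div (by positivity) (by positivity), Real.log_mul hc.ne' (by linarith),
      Real.log_mul two_ne_zero hca.ne']
    ring
  have e2 : Real.log x2 = Real.log c + Real.log (1-t) - Real.log 2 - Real.log a := by
    rw [hx2, Real.log_div (by nlinarith) (by positivity), Real.log_mul hc.ne' (by linarith),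
      Real.log_mul two_ne_zero ha.ne']
    ring
  rw [e1, e2] at hJ
  have hH : c * H (a/c) = -a * (Real.log a - Real.log c) -
      (c-a) * (Real.log (c-a) - Real.log c) := by
    have hdiv : (1 : ℝ) - a/c = (c-a)/c := by field_simp
    simp only [H, hdiv]
    rw [Real.log_div ha.ne' hc.ne', Real.log_div hca.ne' hc.ne']
    field_simp
  rw [hH]
  nlinarith [hJ]

/-- c H(a/c) ≥ H a + a log c, for 0 < a < 1, 1 ≤ c -/
lemma cH_ge {a c : ℝ} (ha : 0 < a) (ha1 : a < 1) (hc : 1 ≤ c) :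
    H a + a * Real.log c ≤ c * H (a/c) := by
  have hc0 : 0 < c := lt_of_lt_of_le one_pos hc
  have hkey : Real.negMulLog (1-a) ≤ c * Real.negMulLog (1 - a/c) := by
    have hθ0 : 0 ≤ (c:ℝ)⁻¹ := by positivity
    have hθ1 : (c:ℝ)⁻¹ ≤ 1 := by
      rw [inv_le_one_iff₀]; right; exact hc
    have hcon := Real.concaveOn_negMulLog.2 (Set.mem_Ici.mpr (by linarith : (0:ℝ) ≤ 1-a))
      (Set.mem_Ici.mpr (by norm_num : (0:ℝ) ≤ 1))
      (by positivity : (0:ℝ) ≤ c⁻¹) (by linarith : (0:ℝ) ≤ 1 - c⁻¹) (by ring)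
    simp only [smul_eq_mul, Real.negMulLog_one, mul_zero, add_zero] at hcon
    have heq : c⁻¹ * (1-a) + (1 - c⁻¹) * 1 = 1 - a/c := by
      field_simp
      ring
    rw [heq] at hcon
    calc Real.negMulLog (1-a) = c * (c⁻¹ * Real.negMulLog (1-a)) := by
          field_simp
    _ ≤ c * Real.negMulLog (1 - a/c) := by
          apply mul_le_mul_of_nonneg_left _ hc0.le
          linarith [hcon]
  have hexp : c * H (a/c) = -a * (Real.log a - Real.log c) + c * Real.negMulLog (1 - a/c) := by
    simp only [H, Real.negMulLog]
    rw [Real.log_div ha.ne' hc0.ne']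
    field_simp
    ring
  have hexp2 : H a = -a * Real.log a + Real.negMulLog (1-a) := by
    simp only [H, Real.negMulLog]; ring
  rw [hexp, hexp2]
  nlinarith [hkey]

/-! ### wo machinery -/

def SS (k : ℕ) (b : ℝ) : Set ℝ :=
  {y : ℝ | ∃ x : ℝ, 0 < x ∧
      y = Real.log (((1 + x) ^ k + (1 - x) ^ k) / (2 * x ^ (b * (k : ℝ))))}

lemma wo_eq (j k : ℕ) (b : ℝ) :
    wo j k b = ((j:ℝ)/k) * sInf (SS k b) - ((j:ℝ)-1) * H b := rfl

lemma N_ge_two {k : ℕ} (hk : Even k) (x : ℝ) : 2 ≤ (1+x)^k + (1-x)^k := by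
  have hc := hk.convexOn_pow (𝕜 := ℝ)
  have h := hc.2 (Set.mem_univ (1+x)) (Set.mem_univ (1-x))
    (by norm_num : (0:ℝ) ≤ 1/2) (by norm_num : (0:ℝ) ≤ 1/2) (by norm_num)
  simp only [smul_eq_mul] at h
  have he : (1/2 : ℝ)*(1+x) + (1/2:ℝ)*(1-x) = 1 := by ring
  rw [he, one_pow] at h
  linarith

lemma N_ge_pow {k : ℕ} (hk : Even k) (x : ℝ) : 2*x^k ≤ (1+x)^k + (1-x)^k := by
  have hc := hk.convexOn_pow (𝕜 := ℝ)
  have h := hc.2 (Set.mem_univ (1+x)) (Set.mem_univ (x-1))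
    (by norm_num : (0:ℝ) ≤ 1/2) (by norm_num : (0:ℝ) ≤ 1/2) (by norm_num)
  simp only [smul_eq_mul] at h
  have he : (1/2 : ℝ)*(1+x) + (1/2:ℝ)*(x-1) = x := by ring
  rw [he] at h
  have hneg : (x-1)^k = (1-x)^k := by
    rw [show x - 1 = -(1-x) by ring, hk.neg_pow]
  rw [hneg] at h
  linarith

lemma N_pos {k : ℕ} (hk : Even k) (x : ℝ) : 0 < (1+x)^k + (1-x)^k :=
  lt_of_lt_of_le (by norm_num) (N_ge_two hk x)

lemma elem_nonneg {k : ℕ} {b : ℝ} (hk : Even k) (hb0 : 0 ≤ b) (hb1 : b ≤ 1) :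
    ∀ y ∈ SS k b, 0 ≤ y := by
  rintro y ⟨x, hx, rfl⟩
  have hrp : (0:ℝ) < x ^ (b*(k:ℝ)) := Real.rpow_pos_of_pos hx _
  have hle : 2 * x ^ (b*(k:ℝ)) ≤ (1+x)^k + (1-x)^k := by
    rcases le_or_gt x 1 with h1 | h1
    · have : x ^ (b*(k:ℝ)) ≤ 1 := Real.rpow_le_one hx.le h1 (by positivity)
      have := N_ge_two hk x
      linarith
    · have h2 : x ^ (b*(k:ℝ)) ≤ x ^ ((k:ℝ)) := by
        apply Real.rpow_le_rpow_of_exponent_le h1.le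
        nlinarith [Nat.cast_nonneg (α := ℝ) k]
      rw [Real.rpow_natCast] at h2
      have := N_ge_pow hk x
      linarith
  apply Real.log_nonneg
  rw [le_div_iff₀ (by positivity)]
  linarith

lemma SS_nonempty (k : ℕ) (b : ℝ) : (SS k b).Nonempty :=
  ⟨_, 1, one_pos, rfl⟩

lemma SS_bddBelow {k : ℕ} {b : ℝ} (hk : Even k) (hb0 : 0 ≤ b) (hb1 : b ≤ 1) :
    BddBelow (SS k b) := ⟨0, fun y hy => elem_nonneg hk hb0 hb1 y hy⟩

lemma sInf_SS_nonneg {k : ℕ} {b : ℝ} (hk : Even k) (hb0 : 0 ≤ b) (hb1 : b ≤ 1) :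
    0 ≤ sInf (SS k b) :=
  le_csInf (SS_nonempty k b) (fun y hy => elem_nonneg hk hb0 hb1 y hy)

lemma sInf_SS_le {k : ℕ} {b x : ℝ} (hk : Even k) (hb0 : 0 ≤ b) (hb1 : b ≤ 1) (hx : 0 < x) :
    sInf (SS k b) ≤ Real.log (((1 + x) ^ k + (1 - x) ^ k) / (2 * x ^ (b * (k:ℝ)))) :=
  csInf_le (SS_bddBelow hk hb0 hb1) ⟨x, hx, rfl⟩

lemma elem_log_eq {k : ℕ} {b x : ℝ} (hk : Even k) (hx : 0 < x) :
    Real.log (((1 + x) ^ k + (1 - x) ^ k) / (2 * x ^ (b * (k:ℝ)))) =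
      Real.log ((1+x)^k + (1-x)^k) - Real.log 2 - (b*(k:ℝ)) * Real.log x := by
  have hN := N_pos hk x
  have hrp : (0:ℝ) < x ^ (b*(k:ℝ)) := Real.rpow_pos_of_pos hx _
  rw [Real.log_div hN.ne' (by positivity), Real.log_mul two_ne_zero hrp.ne',
    Real.log_rpow hx]
  ring

/-- Chernoff bound at x = b/(1-b) -/
lemma sInf_le_cher {k : ℕ} {b : ℝ} (hk : Even k) (hk0 : 0 < k) (hb0 : 0 < b)
    (hb2 : b ≤ 1/2) :
    sInf (SS k b) ≤ (k:ℝ) * H b + Real.log (1 + (1-2*b)^k) - Real.log 2 := by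
  have h1b : (0:ℝ) < 1 - b := by linarith
  set x := b/(1-b) with hxdef
  have hx : 0 < x := by positivity
  have hb1 : b ≤ 1 := by linarith
  have h := sInf_SS_le hk hb0.le hb1 hx
  rw [elem_log_eq hk hx] at h
  have e1 : (1:ℝ) + x = 1/(1-b) := by
    rw [hxdef]; field_simp; ring
  have e2 : (1:ℝ) - x = (1-2*b)/(1-b) := by
    rw [hxdef]; field_simp; ring
  have ht0 : (0:ℝ) ≤ (1-2*b)^k := by
    apply pow_nonneg; linarith
  have eN : (1+x)^k + (1-x)^k = (1 + (1-2*b)^k)/(1-b)^k := by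
    rw [e1, e2, div_pow, div_pow, one_pow, ← add_div]
  have elogN : Real.log ((1+x)^k + (1-x)^k) =
      Real.log (1 + (1-2*b)^k) - (k:ℝ)*Real.log (1-b) := by
    rw [eN, Real.log_div (by linarith) (by positivity), Real.log_pow]
  have elogx : Real.log x = Real.log b - Real.log (1-b) := Real.log_div hb0.ne' h1b.ne'
  rw [elogN, elogx] at h
  have hH : (k:ℝ) * H b = -(b*(k:ℝ))*Real.log b - ((k:ℝ) - b*k)*Real.log (1-b) := by
    simp only [H]; ring
  calc sInf (SS k b) ≤ Real.log (1 + (1-2*b)^k) - (k:ℝ)*Real.log (1-b) - Real.log 2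
        - (b*(k:ℝ))*(Real.log b - Real.log (1-b)) := h
  _ = (k:ℝ) * H b + Real.log (1 + (1-2*b)^k) - Real.log 2 := by rw [hH]; ring

lemma wo_le_cher {j k : ℕ} {b : ℝ} (hk : Even k) (hk0 : 0 < k) (hj : 0 < j) (hjk : j ≤ k)
    (hb0 : 0 < b) (hb2 : b ≤ 1/2) :
    wo j k b ≤ H b + ((j:ℝ)/k) * (Real.log (1 + (1-2*b)^k) - Real.log 2) := by
  have hkR : (0:ℝ) < (k:ℝ) := by exact_mod_cast hk0
  have hl := sInf_le_cher hk hk0 hb0 hb2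
  have hcoef : (0:ℝ) ≤ (j:ℝ)/k := by positivity
  rw [wo_eq]
  have h2 : ((j:ℝ)/k) * sInf (SS k b) ≤
      ((j:ℝ)/k) * ((k:ℝ) * H b + Real.log (1 + (1-2*b)^k) - Real.log 2) :=
    mul_le_mul_of_nonneg_left hl hcoef
  have h3 : ((j:ℝ)/k) * ((k:ℝ) * H b + Real.log (1 + (1-2*b)^k) - Real.log 2) =
      (j:ℝ) * H b + ((j:ℝ)/k) * (Real.log (1 + (1-2*b)^k) - Real.log 2) := by
    field_simp
    ring
  nlinarith [h2, h3]

/-- small-x Chernoff bound at x = sqrt(b/k) -/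
lemma sInf_le_small {k : ℕ} {b : ℝ} (hk : Even k) (hk0 : 0 < k) (hb0 : 0 < b)
    (hbk : b * k ≤ 1) :
    sInf (SS k b) ≤ (k:ℝ)*b/2 + (b*(k:ℝ)/2)*(Real.log k - Real.log b) := by
  have hkR : (0:ℝ) < (k:ℝ) := by exact_mod_cast hk0
  set x := Real.sqrt (b/k) with hxdef
  have hk1 : (1:ℝ) ≤ (k:ℝ) := by exact_mod_cast hk0
  have hbk' : b/(k:ℝ) ≤ 1 := by
    rw [div_le_one hkR]; nlinarith
  have hx : 0 < x := Real.sqrt_pos.mpr (by positivity)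
  have hx1 : x ≤ 1 := by
    rw [hxdef, show (1:ℝ) = Real.sqrt 1 by rw [Real.sqrt_one]]
    exact Real.sqrt_le_sqrt hbk'
  have hb1 : b ≤ 1 := by nlinarith [hkR, (by exact_mod_cast hk0 : (1:ℝ) ≤ k)]
  have h := sInf_SS_le hk hb0.le hb1 hx
  rw [elem_log_eq hk hx] at h
  -- bound log N
  have hN1 : (1+x)^k ≤ Real.exp ((k:ℝ)*x) := by
    have h1 : (1+x) ≤ Real.exp x := by linarith [Real.add_one_le_exp x]
    calc (1+x)^k ≤ (Real.exp x)^k := pow_le_pow_left₀ (by linarith) h1 k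
    _ = Real.exp ((k:ℝ)*x) := by rw [← Real.exp_nat_mul]
  have hN2 : (1-x)^k ≤ Real.exp (-((k:ℝ)*x)) := by
    have h1 : (1-x) ≤ Real.exp (-x) := by linarith [Real.add_one_le_exp (-x)]
    calc (1-x)^k ≤ (Real.exp (-x))^k := pow_le_pow_left₀ (by linarith) h1 k
    _ = Real.exp ((k:ℝ)*(-x)) := by rw [← Real.exp_nat_mul]
    _ = Real.exp (-((k:ℝ)*x)) := by ring_nf
  have hcosh : Real.exp ((k:ℝ)*x) + Real.exp (-((k:ℝ)*x)) ≤ 2*Real.exp (((k:ℝ)*x)^2/2) := by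
    have h1 := Real.cosh_le_exp_half_sq ((k:ℝ)*x)
    rw [Real.cosh_eq] at h1
    linarith
  have hlogN : Real.log ((1+x)^k + (1-x)^k) ≤ Real.log 2 + ((k:ℝ)*x)^2/2 := by
    have hNp := N_pos hk x
    calc Real.log ((1+x)^k + (1-x)^k) ≤ Real.log (2*Real.exp (((k:ℝ)*x)^2/2)) := by
          apply Real.log_le_log hNp
          linarith
    _ = Real.log 2 + ((k:ℝ)*x)^2/2 := by
          rw [Real.log_mul two_ne_zero (Real.exp_pos _).ne', Real.log_exp]
  have hx2 : x^2 = b/k := Real.sq_sqrt (by positivity)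
  have hkx2 : ((k:ℝ)*x)^2/2 = (k:ℝ)*b/2 := by
    rw [mul_pow, hx2]
    field_simp
  have hlogx : Real.log x = (Real.log b - Real.log k)/2 := by
    rw [hxdef, Real.log_sqrt (by positivity), Real.log_div hb0.ne' hkR.ne']
  calc sInf (SS k b) ≤ Real.log ((1+x)^k + (1-x)^k) - Real.log 2 - (b*(k:ℝ))*Real.log x := h
  _ ≤ (Real.log 2 + ((k:ℝ)*x)^2/2) - Real.log 2 - (b*(k:ℝ))*((Real.log b - Real.log k)/2) := by
        rw [hlogx]; linarith
  _ = (k:ℝ)*b/2 + (b*(k:ℝ)/2)*(Real.log k - Real.log b) := by rw [hkx2]; ring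

lemma wo_le_small {j k : ℕ} {b : ℝ} (hk : Even k) (hk2 : 2 ≤ k) (hj : 0 < j) (hjk : j ≤ k)
    (hb0 : 0 < b) (hbk : b * k ≤ 1) :
    wo j k b ≤ ((j:ℝ)*b/2) * Real.log ((k:ℝ)*b) + b/2 - b*Real.log b := by
  have hk0 : 0 < k := by omega
  have hkR : (0:ℝ) < (k:ℝ) := by exact_mod_cast hk0
  have hkR2 : (2:ℝ) ≤ (k:ℝ) := by exact_mod_cast hk2
  have hjR : (1:ℝ) ≤ (j:ℝ) := by exact_mod_cast hj
  have hb2 : b ≤ 1/2 := by nlinarith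
  have hl := sInf_le_small hk hk0 hb0 hbk
  have hH := H_ge_linear hb0 hb2
  rw [wo_eq]
  have hcoef : (0:ℝ) ≤ (j:ℝ)/k := by positivity
  have h2 : ((j:ℝ)/k) * sInf (SS k b) ≤
      ((j:ℝ)/k) * ((k:ℝ)*b/2 + (b*(k:ℝ)/2)*(Real.log k - Real.log b)) :=
    mul_le_mul_of_nonneg_left hl hcoef
  have h3 : ((j:ℝ)/k) * ((k:ℝ)*b/2 + (b*(k:ℝ)/2)*(Real.log k - Real.log b)) =
      (j:ℝ)*b/2 + ((j:ℝ)*b/2)*(Real.log k - Real.log b) := by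
    field_simp
  have h4 : -(((j:ℝ)-1) * H b) ≤ -(((j:ℝ)-1) * (-b*Real.log b + b/2)) := by
    apply neg_le_neg
    apply mul_le_mul_of_nonneg_left hH (by linarith)
  have h5 : Real.log ((k:ℝ)*b) = Real.log k + Real.log b := Real.log_mul hkR.ne' hb0.ne'
  rw [h5]
  nlinarith [h2, h3, h4]

lemma wo_zero_le {j k : ℕ} (hk : Even k) (hk0 : 0 < k) :
    wo j k 0 ≤ 0 := by
  have hkR : (0:ℝ) < (k:ℝ) := by exact_mod_cast hk0
  rw [wo_eq, H_zero, mul_zero, sub_zero]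
  have hinf : sInf (SS k 0) ≤ 0 := by
    by_contra hcon
    push_neg at hcon
    set ε := sInf (SS k 0) with hε
    set x := Real.sqrt ε / (k:ℝ) ⊓ 1 with hxdef
    have hsq : 0 < Real.sqrt ε := Real.sqrt_pos.mpr hcon
    have hx : 0 < x := by
      rw [hxdef]
      apply lt_min (by positivity) one_pos
    have hx1 : x ≤ 1 := min_le_right _ _
    have hxs : x ≤ Real.sqrt ε / (k:ℝ) := min_le_left _ _
    have h := sInf_SS_le (b := 0) hk le_rfl zero_le_one hx
    rw [elem_log_eq hk hx] at h
    simp only [zero_mul] at h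
    -- h : sInf ≤ log N - log 2 - 0
    have hN1 : (1+x)^k ≤ Real.exp ((k:ℝ)*x) := by
      have h1 : (1+x) ≤ Real.exp x := by linarith [Real.add_one_le_exp x]
      calc (1+x)^k ≤ (Real.exp x)^k := pow_le_pow_left₀ (by linarith) h1 k
      _ = Real.exp ((k:ℝ)*x) := by rw [← Real.exp_nat_mul]
    have hN2 : (1-x)^k ≤ Real.exp (-((k:ℝ)*x)) := by
      have h1 : (1-x) ≤ Real.exp (-x) := by linarith [Real.add_one_le_exp (-x)]
      calc (1-x)^k ≤ (Real.exp (-x))^k := pow_le_pow_left₀ (by linarith) h1 k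
      _ = Real.exp ((k:ℝ)*(-x)) := by rw [← Real.exp_nat_mul]
      _ = Real.exp (-((k:ℝ)*x)) := by ring_nf
    have hcosh : Real.exp ((k:ℝ)*x) + Real.exp (-((k:ℝ)*x)) ≤ 2*Real.exp (((k:ℝ)*x)^2/2) := by
      have h1 := Real.cosh_le_exp_half_sq ((k:ℝ)*x)
      rw [Real.cosh_eq] at h1
      linarith
    have hlogN : Real.log ((1+x)^k + (1-x)^k) ≤ Real.log 2 + ((k:ℝ)*x)^2/2 := by
      have hNp := N_pos hk x
      calc Real.log ((1+x)^k + (1-x)^k) ≤ Real.log (2*Real.exp (((k:ℝ)*x)^2/2)) := by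
            apply Real.log_le_log hNp; linarith
      _ = Real.log 2 + ((k:ℝ)*x)^2/2 := by
            rw [Real.log_mul two_ne_zero (Real.exp_pos _).ne', Real.log_exp]
    have hkx : ((k:ℝ)*x)^2 ≤ ε := by
      have h1 : (k:ℝ)*x ≤ Real.sqrt ε := by
        have := mul_le_mul_of_nonneg_left hxs hkR.le
        rw [mul_div_cancel₀ _ hkR.ne'] at this
        linarith
      have h2 : (0:ℝ) ≤ (k:ℝ)*x := by positivity
      nlinarith [Real.sq_sqrt hcon.le, Real.sqrt_nonneg ε]
    have : ε ≤ ε/2 := by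
      calc ε ≤ Real.log ((1+x)^k + (1-x)^k) - Real.log 2 - 0 := h
      _ ≤ ((k:ℝ)*x)^2/2 := by linarith
      _ ≤ ε/2 := by linarith
    linarith
  have : ((j:ℝ)/k) * sInf (SS k 0) ≤ 0 :=mul_nonpos_of_nonneg_of_nonpos (by positivity) hinf
  linarith

lemma elem_inv_eq {k : ℕ} {b x : ℝ} (hk : Even k) (hx : 0 < x) :
    Real.log (((1 + x⁻¹) ^ k + (1 - x⁻¹) ^ k) / (2 * (x⁻¹) ^ (b * (k:ℝ)))) =
    Real.log (((1 + x) ^ k + (1 - x) ^ k) / (2 * x ^ ((1-b) * (k:ℝ)))) := by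
  congr 1
  have hxk : (0:ℝ) < x^k := pow_pos hx k
  have hrp1 : (0:ℝ) < x ^ (b*(k:ℝ)) := Real.rpow_pos_of_pos hx _
  have hrp2 : (0:ℝ) < x ^ ((1-b)*(k:ℝ)) := Real.rpow_pos_of_pos hx _
  have hN : ((1 + x⁻¹) ^ k + (1 - x⁻¹) ^ k) = ((1+x)^k + (1-x)^k)/x^k := by
    have e1 : (1 : ℝ) + x⁻¹ = (x+1)/x := by field_simp
    have e2 : (1 : ℝ) - x⁻¹ = (x-1)/x := by field_simp
    rw [e1, e2, div_pow, div_pow, ← add_div]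
    congr 2
    · ring
    · rw [show x - 1 = -(1-x) by ring, hk.neg_pow]
  have hB : (x⁻¹) ^ (b*(k:ℝ)) = (x ^ (b*(k:ℝ)))⁻¹ := Real.inv_rpow hx.le _
  have key : x ^ (b*(k:ℝ)) * x ^ ((1-b)*(k:ℝ)) = x ^ k := by
    rw [← Real.rpow_add hx, show b*(k:ℝ) + (1-b)*(k:ℝ) = ((k:ℕ):ℝ) by ring,
      Real.rpow_natCast]
  rw [hN, hB]
  rw [div_eq_div_iff (by positivity) (by positivity)]
  field_simp
  linear_combination ((1+x)^k + (1-x)^k) * key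

lemma SS_symm {k : ℕ} (hk : Even k) (b : ℝ) : SS k b = SS k (1-b) := by
  have main : ∀ c : ℝ, ∀ y, y ∈ SS k c → y ∈ SS k (1-c) := by
    rintro c y ⟨x, hx, rfl⟩
    refine ⟨x⁻¹, by positivity, ?_⟩
    rw [elem_inv_eq hk hx, show (1 : ℝ) - (1 - c) = c by ring]
  ext y
  constructor
  · exact main b y
  · intro hy
    have := main (1-b) y hy
    rwa [show (1:ℝ) - (1-b) = b by ring] at this

lemma wo_symm {j k : ℕ} (hk : Even k) (b : ℝ) : wo j k b = wo j k (1-b) := by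
  rw [wo_eq, wo_eq, SS_symm hk b, H_symm]


/-! ### pointwise bounds on the weight-enumerator elements -/

/-- The element expression appearing in `wub`'s sSup set. -/
noncomputable def EE (j k : ℕ) (a b : ℝ) : ℝ :=
  wo j k b + a * Real.log (1 - (1 - 2 * b) ^ k)
    + (1 - a) * Real.log (1 + (1 - 2 * b) ^ k) - Real.log 2

/-- exp(3/2) ≥ 4 -/
lemma four_le_exp : (4:ℝ) ≤ Real.exp (3/2 : ℝ) := by
  have h1 : (1 + 3/32 : ℝ) ≤ Real.exp (3/32) := by linarith [Real.add_one_le_exp (3/32 : ℝ)]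
  have h2 : ((1:ℝ) + 3/32)^(16:ℕ) ≤ (Real.exp (3/32))^(16:ℕ) :=
    pow_le_pow_left₀ (by norm_num) h1 16
  have h3 : (Real.exp ((3:ℝ)/32))^(16:ℕ) = Real.exp (3/2) := by
    rw [← Real.exp_nat_mul]
    norm_num
  have h4 : (4:ℝ) ≤ ((1:ℝ) + 3/32)^(16:ℕ) := by
    norm_num
  rw [h3] at h2
  linarith

lemma pow_bound {k : ℕ} (hk8 : 8 ≤ k) {s : ℝ} (hs0 : 0 ≤ s) (hsu : s ≤ 1 - 2/(k:ℝ)) :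
    2*s^k ≤ s^2/2 := by
  have hk0 : 0 < k := by omega
  have hkR : (0:ℝ) < k := by exact_mod_cast hk0
  have hkR8 : (8:ℝ) ≤ k := by exact_mod_cast hk8
  have hk2 : 2 ≤ k := by omega
  have hsplit : s^k = s^2 * s^(k-2) := by
    rw [← pow_add]
    congr 1
    omega
  have hp1 : s^(k-2) ≤ (1 - 2/(k:ℝ))^(k-2) := pow_le_pow_left₀ hs0 hsu _
  have he1 : (1:ℝ) - 2/(k:ℝ) ≤ Real.exp (-(2/(k:ℝ))) := by
    linarith [Real.add_one_le_exp (-(2/(k:ℝ)))]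
  have hp2 : (1 - 2/(k:ℝ))^(k-2) ≤ (Real.exp (-(2/(k:ℝ))))^(k-2) := by
    apply pow_le_pow_left₀ _ he1
    have : 2/(k:ℝ) ≤ 1 := by
      rw [div_le_one hkR]; linarith
    linarith
  have hcast : ((k-2 : ℕ):ℝ) = (k:ℝ) - 2 := by
    have : (2:ℕ) ≤ k := hk2
    push_cast [Nat.cast_sub this]
    ring
  have hp3 : (Real.exp (-(2/(k:ℝ))))^(k-2) = Real.exp (-(2*((k:ℝ)-2)/k)) := by
    rw [← Real.exp_nat_mul, hcast]
    congr 1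
    ring
  have hp4 : Real.exp (-(2*((k:ℝ)-2)/k)) ≤ Real.exp (-(3/2:ℝ)) := by
    apply Real.exp_le_exp.mpr
    rw [neg_le_neg_iff, le_div_iff₀ hkR]
    nlinarith
  have hp5 : Real.exp (-(3/2:ℝ)) ≤ 1/4 := by
    have h4 := four_le_exp
    have := Real.exp_pos (3/2:ℝ)
    have hinv : Real.exp (-(3/2:ℝ)) * Real.exp (3/2:ℝ) = 1 := by
      rw [← Real.exp_add]; norm_num
    nlinarith [Real.exp_pos (-(3/2:ℝ))]
  have hs1' : s ≤ 1 := by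
    have : 2/(k:ℝ) > 0 := by positivity
    linarith
  have hsq : s^2 ≤ 1 := by nlinarith
  have hy0 : 0 ≤ s^(k-2) := pow_nonneg hs0 _
  have hchain : s^(k-2) ≤ 1/4 := by
    calc s^(k-2) ≤ (1 - 2/(k:ℝ))^(k-2) := hp1
    _ ≤ (Real.exp (-(2/(k:ℝ))))^(k-2) := hp2
    _ = Real.exp (-(2*((k:ℝ)-2)/k)) := hp3
    _ ≤ Real.exp (-(3/2:ℝ)) := hp4
    _ ≤ 1/4 := hp5
  rw [hsplit]
  nlinarith [sq_nonneg s]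

/-- Case A: b ∈ [1/k, 1/2] -/
lemma EE_le_A {j k : ℕ} {a b : ℝ} (hk : Even k) (hk8 : 8 ≤ k) (hj : 0 < j) (hjk : j ≤ k)
    (ha0 : 0 ≤ a) (ha2 : a ≤ 1/2) (hb1 : 1/(k:ℝ) ≤ b) (hb2 : b ≤ 1/2) :
    EE j k a b ≤ -(((j:ℝ)/k) * Real.log 2) := by
  have hk0 : 0 < k := by omega
  have hkR : (0:ℝ) < k := by exact_mod_cast hk0
  have hkR8 : (8:ℝ) ≤ k := by exact_mod_cast hk8
  have hb0 : 0 < b := lt_of_lt_of_le (by positivity) hb1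
  set t := (1 - 2*b)^k with htdef
  have hs0 : (0:ℝ) ≤ 1 - 2*b := by linarith
  have hs1 : 1 - 2*b < 1 := by linarith
  have ht0 : 0 ≤ t := pow_nonneg hs0 k
  have ht1 : t < 1 := pow_lt_one₀ hs0 hs1 (by omega)
  have hL0 : 0 ≤ Real.log (1+t) := Real.log_nonneg (by linarith)
  have hLt : Real.log (1+t) ≤ t := by
    have := Real.log_le_sub_one_of_pos (x := 1+t) (by linarith)
    linarith
  have hlog1mt : Real.log (1-t) ≤ 0 := Real.log_nonpos (by linarith) (by linarith)
  have han : a * Real.log (1-t) ≤ 0 := mul_nonpos_of_nonneg_of_nonpos ha0 hlog1mt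
  have hwo := wo_le_cher hk hk0 hj hjk hb0 hb2
  -- H b ≤ log 2 - (1-2b)²/2
  have hHb : H b ≤ Real.log 2 - (1-2*b)^2/2 := by
    have h := H_quad (s := 1-2*b) hs0 hs1
    rw [show (1-(1-2*b))/2 = b by ring] at h
    exact h
  -- 2t ≤ (1-2b)²/2
  have hsu : 1 - 2*b ≤ 1 - 2/(k:ℝ) := by
    have h2 : 2*(1/(k:ℝ)) ≤ 2*b := by linarith
    have h3 : 2/(k:ℝ) = 2*(1/(k:ℝ)) := by ring
    linarith
  have htsmall : 2*t ≤ (1-2*b)^2/2 := pow_bound hk8 hs0 hsu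
  -- assemble
  have hlam1 : (j:ℝ)/k ≤ 1 := by
    rw [div_le_one hkR]; exact_mod_cast hjk
  have hlam0 : (0:ℝ) ≤ (j:ℝ)/k := by positivity
  have hlamL : ((j:ℝ)/k) * Real.log (1+t) ≤ Real.log (1+t) := by
    nlinarith
  have haL : 0 ≤ a * Real.log (1+t) := mul_nonneg ha0 hL0
  have hwo2 : wo j k b ≤ H b + ((j:ℝ)/k) * Real.log (1+t) - ((j:ℝ)/k) * Real.log 2 := by
    have : ((j:ℝ)/k) * (Real.log (1+t) - Real.log 2)
        = ((j:ℝ)/k)*Real.log (1+t) - ((j:ℝ)/k)*Real.log 2 := by ring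
    rw [← htdef] at hwo
    linarith [hwo]
  simp only [EE, ← htdef]
  have hexp : (1-a) * Real.log (1+t) = Real.log (1+t) - a * Real.log (1+t) := by ring
  linarith [hwo2, hHb, htsmall, hlamL, haL, han, hLt, hexp]

/-- Case B (Jensen): b ∈ (0, 1/k], a ∈ (0, 1/2] -/
lemma EE_le_B {j k : ℕ} {a b : ℝ} (hk : Even k) (hk2 : 2 ≤ k) (hj : 0 < j) (hjk : j ≤ k)
    (ha0 : 0 < a) (ha2 : a ≤ 1/2) (hab : a/(k:ℝ) ≤ b) (hbk : b ≤ 1/(k:ℝ)) :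
    EE j k a b ≤ (1 + Real.log k)/k - H a - a * (((j:ℝ)/k) * Real.log 2) := by
  have hk0 : 0 < k := by omega
  have hkR : (0:ℝ) < k := by exact_mod_cast hk0
  have hkR2 : (2:ℝ) ≤ k := by exact_mod_cast hk2
  have hb0 : 0 < b := lt_of_lt_of_le (by positivity) hab
  have hb2 : b ≤ 1/2 := le_trans hbk (by rw [div_le_div_iff₀ hkR two_pos]; linarith)
  set t := (1 - 2*b)^k with htdef
  have hs0 : (0:ℝ) ≤ 1 - 2*b := by linarith
  have hs1 : 1 - 2*b < 1 := by linarith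
  have ht0 : 0 ≤ t := pow_nonneg hs0 k
  have ht1 : t < 1 := pow_lt_one₀ hs0 hs1 (by omega)
  set l := (j:ℝ)/k with hldef
  have hlam1 : l ≤ 1 := by
    rw [hldef, div_le_one hkR]; exact_mod_cast hjk
  have hlam0 : (0:ℝ) < l := by
    rw [hldef]; positivity
  have hac : a < 1 + l := by linarith
  have hJ := jensen_max (c := 1 + l) ha0 hac ht0 ht1
  have hcH := cH_ge (c := 1 + l) ha0 (by linarith) (by linarith)
  have hlogc : l * Real.log 2 ≤ Real.log (1 + l) :=
    mul_log_two_le_log_one_add hlam0.le hlam1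
  have halogc : a * (l * Real.log 2) ≤ a * Real.log (1 + l) :=
    mul_le_mul_of_nonneg_left hlogc ha0.le
  have hwo := wo_le_cher hk hk0 hj hjk hb0 hb2
  rw [← htdef, ← hldef] at hwo
  have hHb : H b ≤ (1 + Real.log k)/k := by
    have h1 : H b ≤ b * (1 - Real.log b) := H_le_linear hb0 (by linarith)
    have h2 : b * (1 - Real.log b) ≤ (1/(k:ℝ)) * (1 - Real.log (1/(k:ℝ))) := by
      apply blog_mono hb0 hbk
      rw [div_le_one hkR]; linarith
    have h3 : Real.log (1/(k:ℝ)) = -Real.log k := by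
      rw [one_div, Real.log_inv]
    rw [h3] at h2
    have : (1/(k:ℝ)) * (1 - -Real.log k) = (1 + Real.log k)/k := by ring
    linarith [this ▸ h2]
  have hexpand : (1 + l - a) * Real.log (1+t) + a * Real.log (1-t)
      = l * Real.log (1+t) + (1-a) * Real.log (1+t) + a * Real.log (1-t) := by ring
  simp only [EE, ← htdef]
  -- E ≤ H b + [(c-a)L+ + aL-] - (1+l) log 2 ≤ H b - (1+l) H(a/(1+l))
  -- ≤ H b - H a - a log(1+l) ≤ bound
  have step1 : wo j k b + a * Real.log (1-t) + (1-a) * Real.log (1+t) - Real.log 2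
      ≤ H b + ((1+l-a) * Real.log (1+t) + a * Real.log (1-t)) - (1+l) * Real.log 2 := by
    have : l * (Real.log (1+t) - Real.log 2)
        = l * Real.log (1+t) - l * Real.log 2 := by ring
    linarith [hwo, hexpand]
  have step2 : H b + ((1+l-a) * Real.log (1+t) + a * Real.log (1-t)) - (1+l) * Real.log 2
      ≤ H b - (1+l) * H (a/(1+l)) := by linarith [hJ]
  have step3 : H b - (1+l) * H (a/(1+l)) ≤ H b - H a - a * Real.log (1+l) := by
    linarith [hcH]
  have step4 : H b - H a - a * Real.log (1+l)
      ≤ (1 + Real.log k)/k - H a - a * (l * Real.log 2) := by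
    linarith [hHb, halogc]
  linarith [step1, step2, step3, step4]


lemma exp_neg_one_le_half : Real.exp (-1:ℝ) ≤ 1/2 := by
  have h2 : (2:ℝ) ≤ Real.exp 1 := by linarith [Real.add_one_le_exp (1:ℝ)]
  have hinv : Real.exp (-1:ℝ) * Real.exp 1 = 1 := by rw [← Real.exp_add]; norm_num
  nlinarith [Real.exp_pos (-1:ℝ)]

/-- ρ bound: (1/2 + log k)/k ≤ 1/100 for k ≥ 40000 -/
lemma rho_bound {k : ℕ} (hk4 : (40000:ℝ) ≤ (k:ℝ)) :
    1/(2*(k:ℝ)) + Real.log k/(k:ℝ) ≤ 1/100 := by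
  have hkR : (0:ℝ) < k := by linarith
  have hsq0 : (0:ℝ) < Real.sqrt k := Real.sqrt_pos.mpr hkR
  have hlogk : Real.log k ≤ 2*Real.sqrt k - 2 := by
    have h1 : Real.log (Real.sqrt k) ≤ Real.sqrt k - 1 := Real.log_le_sub_one_of_pos hsq0
    have h2 : Real.log (Real.sqrt k) = Real.log k / 2 := Real.log_sqrt hkR.le
    linarith
  have hsqk : (200:ℝ) ≤ Real.sqrt k := by
    have h1 : Real.sqrt 40000 ≤ Real.sqrt k := Real.sqrt_le_sqrt hk4
    have h2 : Real.sqrt 40000 = 200 := by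
      rw [show (40000:ℝ) = 200^2 by norm_num]
      exact Real.sqrt_sq (by norm_num)
    linarith
  have hmul : Real.sqrt k * Real.sqrt k = (k:ℝ) := Real.mul_self_sqrt hkR.le
  have c1 : (k:ℝ)*Real.log k ≤ 2*((k:ℝ)*Real.sqrt k) - 2*(k:ℝ) := by
    nlinarith [mul_le_mul_of_nonneg_left hlogk hkR.le]
  have c2 : 400*((k:ℝ)*Real.sqrt k) ≤ 2*((k:ℝ)*(k:ℝ)) := by
    have h0 : (0:ℝ) ≤ (k:ℝ)*Real.sqrt k := by positivity
    nlinarith [h0, hsqk, hmul]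
  rw [div_add_div _ _ (by positivity) hkR.ne', div_le_div_iff₀ (by positivity) (by norm_num)]
  nlinarith [c1, c2, hkR]

/-- Case C: small a branch, b ∈ [a/k, 1/k], a ≤ exp(-24/γ) -/
lemma EE_le_C {j k : ℕ} {a b g : ℝ} (hk : Even k) (hj : 0 < j) (hjk : j ≤ k)
    (hg0 : 0 < g) (hg1 : g ≤ 1) (hgl : g ≤ (j:ℝ)/k) (hkg : 4/g ≤ (k:ℝ))
    (hk4 : (40000:ℝ) ≤ (k:ℝ))
    (ha0 : 0 < a) (haS : a ≤ Real.exp (-(24/g)))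
    (hab : a/(k:ℝ) ≤ b) (hbk : b ≤ 1/(k:ℝ)) :
    EE j k a b ≤ -H a - a/8 := by
  have hk2 : 2 ≤ k := by
    by_contra h
    push_neg at h
    have : (k:ℝ) ≤ 1 := by exact_mod_cast Nat.lt_succ_iff.mp h
    linarith
  have hk0 : 0 < k := by omega
  have hkR : (0:ℝ) < k := by exact_mod_cast hk0
  have hb0 : 0 < b := lt_of_lt_of_le (by positivity) hab
  have hb2 : b ≤ 1/2 := le_trans hbk (by rw [div_le_div_iff₀ hkR two_pos]; linarith)
  set l := (j:ℝ)/k with hldef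
  have hlam1 : l ≤ 1 := by rw [hldef, div_le_one hkR]; exact_mod_cast hjk
  have hlam0 : (0:ℝ) < l := by rw [hldef]; positivity
  set u := (k:ℝ)*b with hudef
  have hu0 : 0 < u := by positivity
  have hua : a ≤ u := by
    have := mul_le_mul_of_nonneg_left hab hkR.le
    rwa [mul_div_cancel₀ _ hkR.ne'] at this
  have hu1 : u ≤ 1 := by
    have := mul_le_mul_of_nonneg_left hbk hkR.le
    rwa [mul_one_div, div_self hkR.ne'] at this
  -- a ≤ 1/2
  have haexp : Real.exp (-(24/g)) ≤ Real.exp (-1:ℝ) := by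
    apply Real.exp_le_exp.mpr
    rw [neg_le_neg_iff, le_div_iff₀ hg0]
    nlinarith
  have ha2 : a ≤ 1/2 := le_trans haS (le_trans haexp exp_neg_one_le_half)
  set t := (1 - 2*b)^k with htdef
  have hs0 : (0:ℝ) ≤ 1 - 2*b := by linarith
  have hs1 : 1 - 2*b < 1 := by linarith
  have ht0 : 0 ≤ t := pow_nonneg hs0 k
  have ht1 : t < 1 := pow_lt_one₀ hs0 hs1 (by omega)
  -- 1 - t ≤ 2u
  have ht_lb : 1 - t ≤ 2*u := by
    have hber := one_add_mul_le_pow (a := -(2*b)) (by linarith) k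
    have : (1 + -(2*b)) = 1 - 2*b := by ring
    rw [this] at hber
    have : (1:ℝ) + (k:ℝ)*(-(2*b)) = 1 - 2*((k:ℝ)*b) := by ring
    rw [this] at hber
    rw [htdef, hudef]
    linarith
  have hlog1mt : Real.log (1-t) ≤ Real.log 2 + Real.log u := by
    have h1 : Real.log (1-t) ≤ Real.log (2*u) :=
      Real.log_le_log (by linarith) (by linarith)
    rwa [Real.log_mul two_ne_zero hu0.ne'] at h1
  -- log(1+t) ≤ log 2 - u/4
  have hlog1pt : Real.log (1+t) ≤ Real.log 2 - u/4 := by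
    have htexp : t ≤ Real.exp (-(2*u)) := by
      have h1 : (1:ℝ) - 2*b ≤ Real.exp (-(2*b)) := by
        linarith [Real.add_one_le_exp (-(2*b))]
      have h2 : (1-2*b)^k ≤ (Real.exp (-(2*b)))^k := pow_le_pow_left₀ hs0 h1 k
      have h3 : (Real.exp (-(2*b)))^k = Real.exp ((k:ℝ)*(-(2*b))) := by
        rw [← Real.exp_nat_mul]
      rw [h3, show (k:ℝ)*(-(2*b)) = -(2*((k:ℝ)*b)) by ring] at h2
      rw [htdef, hudef]
      exact h2
    have hexp2 : Real.exp (-(2*u)) ≤ 1 - u/2 := exp_neg_two_mul_le hu0.le hu1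
    have h4 : 1 + t ≤ 2*(1 - u/4) := by linarith
    have h5 : Real.log (1+t) ≤ Real.log (2*(1-u/4)) :=
      Real.log_le_log (by linarith) h4
    rw [Real.log_mul two_ne_zero (by linarith : (1:ℝ) - u/4 ≠ 0)] at h5
    have h6 : Real.log (1 - u/4) ≤ -(u/4) := log_one_sub_le (by linarith)
    linarith
  -- wo bound in u-terms
  have hbku : b * (k:ℝ) ≤ 1 := by rw [mul_comm]; rw [hudef] at hu1; exact hu1
  have hwo := wo_le_small hk hk2 hj hjk hb0 hbku
  have hbu : b = u/(k:ℝ) := by rw [hudef]; field_simp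
  have hlogb : Real.log b = Real.log u - Real.log k := by
    rw [hbu, Real.log_div hu0.ne' hkR.ne']
  have hwoU : wo j k b ≤ (l*u/2)*Real.log u + u/(2*(k:ℝ)) + (u/(k:ℝ))*(Real.log k - Real.log u) := by
    have e1 : ((j:ℝ)*b/2) = l*u/2 := by
      rw [hldef, hbu]; field_simp
    have e2 : ((k:ℝ)*b) = u := by rw [hudef]
    have e3 : b/2 = u/(2*(k:ℝ)) := by rw [hbu]; ring
    have e4 : -(b*Real.log b) = (u/(k:ℝ))*(Real.log k - Real.log u) := by
      rw [hlogb, hbu]; ring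
    calc wo j k b ≤ ((j:ℝ)*b/2) * Real.log ((k:ℝ)*b) + b/2 - b*Real.log b := hwo
    _ = (l*u/2)*Real.log u + u/(2*(k:ℝ)) + (u/(k:ℝ))*(Real.log k - Real.log u) := by
        rw [e2, e1, e3]; linarith [e4]
  -- absorb (u/k)(−log u) into (l u/4) log u
  have hlogu : Real.log u ≤ 0 := Real.log_nonpos hu0.le hu1
  have hcoef : 1/(k:ℝ) ≤ l/4 := by
    have h1 : (4:ℝ) ≤ g*(k:ℝ) := by
      rw [div_le_iff₀ hg0] at hkg; linarith [hkg]
    rw [div_le_div_iff₀ hkR (by norm_num)]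
    calc (1:ℝ)*4 = 4 := by ring
    _ ≤ g*(k:ℝ) := h1
    _ ≤ l*(k:ℝ) := mul_le_mul_of_nonneg_right hgl hkR.le
  have habs : (l*u/2)*Real.log u - (u/(k:ℝ))*Real.log u ≤ (l*u/4)*Real.log u := by
    have h1 : u/(k:ℝ) ≤ l*u/4 := by
      have := mul_le_mul_of_nonneg_left hcoef hu0.le
      calc u/(k:ℝ) = u * (1/(k:ℝ)) := by ring
      _ ≤ u * (l/4) := this
      _ = l*u/4 := by ring
    have h2 : 0 ≤ -Real.log u := by linarith
    have h3 := mul_le_mul_of_nonneg_right h1 h2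
    linarith only [h3]
  have hrho := rho_bound hk4
  have hrhoU : u/(2*(k:ℝ)) + (u/(k:ℝ))*Real.log k ≤ u/100 := by
    have := mul_le_mul_of_nonneg_left hrho hu0.le
    calc u/(2*(k:ℝ)) + (u/(k:ℝ))*Real.log k = u * (1/(2*(k:ℝ)) + Real.log k/(k:ℝ)) := by ring
    _ ≤ u * (1/100) := this
    _ = u/100 := by ring
  -- middle bound on EE
  have hEmid : EE j k a b ≤ (l*u/4)*Real.log u + u/100 + a*Real.log u - u/8 := by
    simp only [EE, ← htdef]
    have c1 : a * Real.log (1-t) ≤ a*(Real.log 2 + Real.log u) :=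
      mul_le_mul_of_nonneg_left hlog1mt ha0.le
    have c2 : (1-a) * Real.log (1+t) ≤ (1-a)*(Real.log 2 - u/4) :=
      mul_le_mul_of_nonneg_left hlog1pt (by linarith)
    have c3 : a*(Real.log 2 + Real.log u) + (1-a)*(Real.log 2 - u/4) - Real.log 2
        = a*Real.log u - (1-a)*(u/4) := by ring
    have c4 : a*Real.log u - (1-a)*(u/4) ≤ a*Real.log u - u/8 := by
      linarith only [mul_le_mul_of_nonneg_right ha2 hu0.le]
    have c5 : (u/(k:ℝ))*(Real.log k - Real.log u)
        = (u/(k:ℝ))*Real.log k - (u/(k:ℝ))*Real.log u := by ring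
    linarith only [hwoU, habs, hrhoU, c1, c2, c3, c4, c5]
  -- final: (l u/4) log u + u/100 + a log u + a(1 - log a) + a/8 ≤ u/8
  have hHa : H a ≤ a*(1 - Real.log a) := H_le_linear ha0 (by linarith)
  have hfinal : (l*u/4)*Real.log u + u/100 + a*Real.log u + a*(1 - Real.log a) + a/8 ≤ u/8 := by
    rcases le_or_gt (64*a) u with hcase | hcase
    · -- Case A
      have h1 : (l*u/4)*Real.log u ≤ 0 :=
        mul_nonpos_of_nonneg_of_nonpos (by positivity) hlogu
      have h2 : a*Real.log u - a*Real.log a ≤ u/16 - a + a*Real.log 16 := by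
        have hd := Real.log_le_sub_one_of_pos (x := u/(16*a)) (by positivity)
        have he : Real.log (u/(16*a)) = Real.log u - (Real.log 16 + Real.log a) := by
          rw [Real.log_div hu0.ne' (by positivity), Real.log_mul (by norm_num) ha0.ne']
        rw [he] at hd
        have hd2 := mul_le_mul_of_nonneg_left hd ha0.le
        have he2 : a * (u/(16*a) - 1) = u/16 - a := by field_simp
        rw [he2] at hd2
        linarith [hd2]
      have h3 : a*Real.log 16 ≤ a * (4*(0.6932:ℝ)) := by
        have he : Real.log 16 = 4 * Real.log 2 := by
          rw [show (16:ℝ) = 2^4 by norm_num, Real.log_pow]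
          norm_num
        rw [he]
        linarith only [mul_le_mul_of_nonneg_left log2_lt.le ha0.le]
      linarith only [h1, h2, h3, hcase, hu0.le]
    · -- Case B
      have hB1 : u ≤ Real.exp (-1:ℝ) := by
        have h64 : (64:ℝ) ≤ Real.exp (23:ℝ) := by
          have ha' : (12.5:ℝ) ≤ Real.exp (23/2 : ℝ) := by
            linarith [Real.add_one_le_exp (23/2:ℝ)]
          have hb' : Real.exp (23:ℝ) = Real.exp (23/2:ℝ) * Real.exp (23/2:ℝ) := by
            rw [← Real.exp_add]; norm_num
          nlinarith [Real.exp_pos (23/2:ℝ)]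
        have hstep : (64:ℝ) * Real.exp (-24:ℝ) ≤ Real.exp (-1:ℝ) := by
          have := mul_le_mul_of_nonneg_right h64 (Real.exp_pos (-24:ℝ)).le
          have he : Real.exp (23:ℝ) * Real.exp (-24:ℝ) = Real.exp (-1:ℝ) := by
            rw [← Real.exp_add]; norm_num
          linarith [he ▸ this]
        have hgexp : Real.exp (-(24/g)) ≤ Real.exp (-24:ℝ) := by
          apply Real.exp_le_exp.mpr
          rw [neg_le_neg_iff, le_div_iff₀ hg0]
          nlinarith
        have : u < 64 * Real.exp (-24:ℝ) := by
          calc u < 64*a := hcase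
          _ ≤ 64 * Real.exp (-(24/g)) := by linarith [haS]
          _ ≤ 64 * Real.exp (-24:ℝ) := by linarith [hgexp]
        linarith
      have hB2 : -a * Real.log a ≤ -u * Real.log u := ulog_mono ha0 hua hB1
      have hB3 : Real.log a ≤ -(24/g) := by
        calc Real.log a ≤ Real.log (Real.exp (-(24/g))) := Real.log_le_log ha0 haS
        _ = -(24/g) := Real.log_exp _
      have hla0 : 0 ≤ -a*Real.log a := by
        have h := Real.log_nonpos ha0.le (by linarith : a ≤ 1)
        have := mul_nonneg ha0.le (neg_nonneg.mpr h)
        linarith only [this]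
      have hB4 : 6*a ≤ (l*u/4)*(-Real.log u) := by
        have s1 : a*(24/g) ≤ a*(-Real.log a) := by
          have : 24/g ≤ -Real.log a := by linarith only [hB3]
          exact mul_le_mul_of_nonneg_left this ha0.le
        have s2 : a*(-Real.log a) ≤ u*(-Real.log u) := by
          have e1 : a*(-Real.log a) = -a*Real.log a := by ring
          have e2 : u*(-Real.log u) = -u*Real.log u := by ring
          linarith only [hB2, e1, e2]
        have s3 : (g/4) * (a*(24/g)) ≤ (g/4) * (u*(-Real.log u)) := by
          apply mul_le_mul_of_nonneg_left _ (by positivity)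
          linarith only [s1, s2]
        have s4 : (g/4) * (a*(24/g)) = 6*a := by field_simp; ring
        have s5 : (g/4) * (u*(-Real.log u)) ≤ (l/4) * (u*(-Real.log u)) := by
          apply mul_le_mul_of_nonneg_right _
            (mul_nonneg hu0.le (by linarith only [hlogu] : 0 ≤ -Real.log u))
          linarith only [hgl]
        have s6 : (l/4) * (u*(-Real.log u)) = (l*u/4)*(-Real.log u) := by ring
        linarith only [s3, s4, s5, s6]
      have hB5 : a*Real.log u ≤ a*Real.log a + a*Real.log 64 := by
        have h1 : Real.log u ≤ Real.log (64*a) := Real.log_le_log hu0 (by linarith)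
        rw [Real.log_mul (by norm_num) ha0.ne'] at h1
        have := mul_le_mul_of_nonneg_left h1 ha0.le
        linarith only [this]
      have hB6 : a*Real.log 64 ≤ a * (6*(0.6932:ℝ)) := by
        have he : Real.log 64 = 6 * Real.log 2 := by
          rw [show (64:ℝ) = 2^6 by norm_num, Real.log_pow]
          norm_num
        rw [he]
        linarith only [mul_le_mul_of_nonneg_left log2_lt.le ha0.le]
      have hu100 : u/100 ≤ u/8 := by linarith only [hu0.le]
      linarith only [hB4, hB5, hB6, hu100, hu0.le, ha0.le]
  linarith only [hEmid, hHa, hfinal]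


/-- Case D: a = 0, b ∈ (0, 1/k] -/
lemma EE_le_D {j k : ℕ} {b g : ℝ} (hk : Even k) (hj : 0 < j) (hjk : j ≤ k)
    (hg0 : 0 < g) (hgl : g ≤ (j:ℝ)/k) (hkg : 4/g ≤ (k:ℝ)) (hk4 : (40000:ℝ) ≤ (k:ℝ))
    (hb0 : 0 < b) (hbk : b ≤ 1/(k:ℝ)) :
    EE j k 0 b ≤ 0 := by
  have hk2 : 2 ≤ k := by
    by_contra h
    push_neg at h
    have : (k:ℝ) ≤ 1 := by exact_mod_cast Nat.lt_succ_iff.mp h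
    linarith
  have hk0 : 0 < k := by omega
  have hkR : (0:ℝ) < k := by exact_mod_cast hk0
  have hb2 : b ≤ 1/2 := le_trans hbk (by rw [div_le_div_iff₀ hkR two_pos]; linarith)
  set l := (j:ℝ)/k with hldef
  have hlam0 : (0:ℝ) < l := by rw [hldef]; positivity
  set u := (k:ℝ)*b with hudef
  have hu0 : 0 < u := by positivity
  have hu1 : u ≤ 1 := by
    have := mul_le_mul_of_nonneg_left hbk hkR.le
    rwa [mul_one_div, div_self hkR.ne'] at this
  set t := (1 - 2*b)^k with htdef
  have hs0 : (0:ℝ) ≤ 1 - 2*b := by linarith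
  have hs1 : 1 - 2*b < 1 := by linarith
  have ht0 : 0 ≤ t := pow_nonneg hs0 k
  have ht1 : t < 1 := pow_lt_one₀ hs0 hs1 (by omega)
  have hlog1pt : Real.log (1+t) ≤ Real.log 2 - u/4 := by
    have htexp : t ≤ Real.exp (-(2*u)) := by
      have h1 : (1:ℝ) - 2*b ≤ Real.exp (-(2*b)) := by
        linarith [Real.add_one_le_exp (-(2*b))]
      have h2 : (1-2*b)^k ≤ (Real.exp (-(2*b)))^k := pow_le_pow_left₀ hs0 h1 k
      have h3 : (Real.exp (-(2*b)))^k = Real.exp ((k:ℝ)*(-(2*b))) := by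
        rw [← Real.exp_nat_mul]
      rw [h3, show (k:ℝ)*(-(2*b)) = -(2*((k:ℝ)*b)) by ring] at h2
      rw [htdef, hudef]
      exact h2
    have hexp2 : Real.exp (-(2*u)) ≤ 1 - u/2 := exp_neg_two_mul_le hu0.le hu1
    have h4 : 1 + t ≤ 2*(1 - u/4) := by linarith
    have h5 : Real.log (1+t) ≤ Real.log (2*(1-u/4)) :=
      Real.log_le_log (by linarith) h4
    rw [Real.log_mul two_ne_zero (by linarith : (1:ℝ) - u/4 ≠ 0)] at h5
    have h6 : Real.log (1 - u/4) ≤ -(u/4) := log_one_sub_le (by linarith)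
    linarith
  have hbku : b * (k:ℝ) ≤ 1 := by rw [mul_comm]; rw [hudef] at hu1; exact hu1
  have hwo := wo_le_small hk hk2 hj hjk hb0 hbku
  have hbu : b = u/(k:ℝ) := by rw [hudef]; field_simp
  have hlogb : Real.log b = Real.log u - Real.log k := by
    rw [hbu, Real.log_div hu0.ne' hkR.ne']
  have hwoU : wo j k b ≤ (l*u/2)*Real.log u + u/(2*(k:ℝ)) + (u/(k:ℝ))*(Real.log k - Real.log u) := by
    have e1 : ((j:ℝ)*b/2) = l*u/2 := by
      rw [hldef, hbu]; field_simp
    have e2 : ((k:ℝ)*b) = u := by rw [hudef]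
    have e3 : b/2 = u/(2*(k:ℝ)) := by rw [hbu]; ring
    have e4 : -(b*Real.log b) = (u/(k:ℝ))*(Real.log k - Real.log u) := by
      rw [hlogb, hbu]; ring
    calc wo j k b ≤ ((j:ℝ)*b/2) * Real.log ((k:ℝ)*b) + b/2 - b*Real.log b := hwo
    _ = (l*u/2)*Real.log u + u/(2*(k:ℝ)) + (u/(k:ℝ))*(Real.log k - Real.log u) := by
        rw [e2, e1, e3]; linarith only [e4]
  have hlogu : Real.log u ≤ 0 := Real.log_nonpos hu0.le hu1
  have hcoef : 1/(k:ℝ) ≤ l/4 := by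
    have h1 : (4:ℝ) ≤ g*(k:ℝ) := by
      rw [div_le_iff₀ hg0] at hkg; linarith [hkg]
    rw [div_le_div_iff₀ hkR (by norm_num)]
    calc (1:ℝ)*4 = 4 := by ring
    _ ≤ g*(k:ℝ) := h1
    _ ≤ l*(k:ℝ) := mul_le_mul_of_nonneg_right hgl hkR.le
  have habs : (l*u/2)*Real.log u - (u/(k:ℝ))*Real.log u ≤ (l*u/4)*Real.log u := by
    have h1 : u/(k:ℝ) ≤ l*u/4 := by
      have := mul_le_mul_of_nonneg_left hcoef hu0.le
      calc u/(k:ℝ) = u * (1/(k:ℝ)) := by ring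
      _ ≤ u * (l/4) := this
      _ = l*u/4 := by ring
    have h2 : 0 ≤ -Real.log u := by linarith
    have h3 := mul_le_mul_of_nonneg_right h1 h2
    linarith only [h3]
  have hrho := rho_bound hk4
  have hrhoU : u/(2*(k:ℝ)) + (u/(k:ℝ))*Real.log k ≤ u/100 := by
    have := mul_le_mul_of_nonneg_left hrho hu0.le
    calc u/(2*(k:ℝ)) + (u/(k:ℝ))*Real.log k = u * (1/(2*(k:ℝ)) + Real.log k/(k:ℝ)) := by ring
    _ ≤ u * (1/100) := this
    _ = u/100 := by ring
  have hneg : (l*u/4)*Real.log u ≤ 0 :=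
    mul_nonpos_of_nonneg_of_nonpos (by positivity) hlogu
  have c5 : (u/(k:ℝ))*(Real.log k - Real.log u)
      = (u/(k:ℝ))*Real.log k - (u/(k:ℝ))*Real.log u := by ring
  simp only [EE, ← htdef]
  have hz : (0:ℝ) * Real.log (1-t) = 0 := by ring
  have ho : ((1:ℝ)-0) * Real.log (1+t) = Real.log (1+t) := by ring
  linarith only [hwoU, habs, hrhoU, hneg, c5, hlog1pt, hz, ho, hu0.le]

/-- origin: a = 0, b = 0 -/
lemma EE_origin {j k : ℕ} (hk : Even k) (hk0 : 0 < k) : EE j k 0 0 ≤ 0 := by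
  have h := wo_zero_le (j := j) hk hk0
  simp only [EE]
  norm_num
  linarith

/-- symmetry of EE in b ↦ 1-b -/
lemma EE_symm {j k : ℕ} (hk : Even k) (a b : ℝ) : EE j k a b = EE j k a (1-b) := by
  simp only [EE]
  rw [wo_symm hk b]
  have e : (1 - 2*(1-b)) = -(1-2*b) := by ring
  rw [e, hk.neg_pow]

/-! ### Hinv -/

lemma Hinv_spec {y : ℝ} (h0 : 0 ≤ y) (h1 : y ≤ Real.log 2) :
    Hinv y ∈ Icc (0:ℝ) (1/2) ∧ H (Hinv y) = y := by
  have hcont : ContinuousOn H (Icc 0 (1/2)) := by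
    have hfun : H = Real.binEntropy := funext H_eq_binEntropy
    rw [hfun]
    exact Real.binEntropy_continuous.continuousOn
  have hy : y ∈ Icc (H 0) (H (1/2)) := by
    rw [H_zero, H_half]; exact ⟨h0, h1⟩
  obtain ⟨a, haI, haH⟩ := intermediate_value_Icc (by norm_num : (0:ℝ) ≤ 1/2) hcont hy
  have hset : {x : ℝ | x ∈ Set.Icc (0:ℝ) (1/2) ∧ H x = y} = {a} := by
    ext z
    simp only [Set.mem_setOf_eq, Set.mem_singleton_iff]
    constructor
    · rintro ⟨hzI, hzH⟩
      by_contra hne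
      rcases lt_or_gt_of_ne hne with h | h
      · have := H_strict_mono hzI haI h
        rw [hzH, haH] at this
        exact lt_irrefl y this
      · have := H_strict_mono haI hzI h
        rw [hzH, haH] at this
        exact lt_irrefl y this
    · rintro rfl
      exact ⟨haI, haH⟩
  rw [Hinv, hset, csInf_singleton]
  exact ⟨haI, haH⟩

lemma Hinv_lt {y1 y2 : ℝ} (h0 : 0 ≤ y1) (h2 : y2 ≤ Real.log 2) (h : y1 < y2) :
    Hinv y1 < Hinv y2 := by
  obtain ⟨hm1, hH1⟩ := Hinv_spec h0 (by linarith)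
  obtain ⟨hm2, hH2⟩ := Hinv_spec (by linarith) h2
  by_contra hcon
  push_neg at hcon
  rcases eq_or_lt_of_le hcon with he | hlt
  · rw [he, hH1] at hH2
    linarith
  · have := H_strict_mono hm2 hm1 hlt
    rw [hH1, hH2] at this
    linarith

lemma Hinv_pos {y : ℝ} (h0 : 0 < y) (h1 : y ≤ Real.log 2) : 0 < Hinv y := by
  obtain ⟨hm, hH⟩ := Hinv_spec h0.le h1
  rcases eq_or_lt_of_le hm.1 with he | hlt
  · rw [← he] at hH
    rw [H_zero] at hH
    linarith
  · exact hlt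


/-! ### assembly -/

lemma hk_le {k : ℕ} {c : ℝ} (hc : 0 < c) (hk4c : 4/c^2 ≤ (k:ℝ)) (hk1 : (1:ℝ) ≤ k) :
    (1 + Real.log k)/k ≤ c := by
  have hkR : (0:ℝ) < k := by linarith
  have hsq0 : (0:ℝ) < Real.sqrt k := Real.sqrt_pos.mpr hkR
  have hlogk : Real.log k ≤ 2*Real.sqrt k - 2 := by
    have h1 : Real.log (Real.sqrt k) ≤ Real.sqrt k - 1 := Real.log_le_sub_one_of_pos hsq0
    have h2 : Real.log (Real.sqrt k) = Real.log k / 2 := Real.log_sqrt hkR.le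
    linarith
  have h2c : 2/c ≤ Real.sqrt k := by
    have he : (4:ℝ)/c^2 = (2/c)^2 := by field_simp; ring
    have h1 : Real.sqrt (4/c^2) ≤ Real.sqrt k := Real.sqrt_le_sqrt hk4c
    have h2 : Real.sqrt (4/c^2) = 2/c := by
      rw [he]
      exact Real.sqrt_sq (by positivity)
    linarith
  have hmul : Real.sqrt k * Real.sqrt k = (k:ℝ) := Real.mul_self_sqrt hkR.le
  rw [div_le_iff₀ hkR]
  have hck : c * (k:ℝ) = c * Real.sqrt k * Real.sqrt k := by rw [mul_assoc, hmul]
  have h3 : 2 ≤ c * Real.sqrt k := by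
    have := mul_le_mul_of_nonneg_left h2c hc.le
    rw [mul_div_cancel₀ _ hc.ne'] at this
    linarith
  nlinarith [h3, hsq0, hlogk]

/-- Case I assembly: a = 0 -/
lemma caseI {j k : ℕ} {g : ℝ} (hk : Even k) (hk8 : 8 ≤ k) (hj : 0 < j) (hjk : j ≤ k)
    (hg0 : 0 < g) (hgl : g ≤ (j:ℝ)/k) (hkg : 4/g ≤ (k:ℝ)) (hk4 : (40000:ℝ) ≤ (k:ℝ)) :
    ∀ b, 0 ≤ b → b ≤ 1 → EE j k 0 b ≤ 0 := by
  have hk0 : 0 < k := by omega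
  have half : ∀ b, 0 ≤ b → b ≤ 1/2 → EE j k 0 b ≤ 0 := by
    intro b hb0 hb2
    rcases eq_or_lt_of_le hb0 with he | hbpos
    · rw [← he]; exact EE_origin hk hk0
    · rcases le_or_gt b (1/(k:ℝ)) with hc | hc
      · exact EE_le_D hk hj hjk hg0 hgl hkg hk4 hbpos hc
      · have h := EE_le_A hk hk8 hj hjk le_rfl (by norm_num) hc.le hb2
        have h2 : 0 ≤ ((j:ℝ)/k)*Real.log 2 := by positivity
        linarith
  intro b hb0 hb1
  rcases le_or_gt b (1/2) with h | h
  · exact half b hb0 h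
  · rw [EE_symm hk]
    exact half (1-b) (by linarith) (by linarith)

/-- Case II assembly: 0 < a ≤ δ' -/
lemma caseII {j k : ℕ} {g t0 a : ℝ} (hk : Even k) (hk8 : 8 ≤ k) (hj : 0 < j) (hjk : j ≤ k)
    (hg0 : 0 < g) (hg1 : g ≤ 1) (hgl : g ≤ (j:ℝ)/k) (hkg : 4/g ≤ (k:ℝ)) (hk4 : (40000:ℝ) ≤ (k:ℝ))
    (ha0 : 0 < a) (ha5 : a ≤ 1/2)
    (hHa : H a ≤ ((j:ℝ)/k)*Real.log 2 - t0)
    (hkc2 : (1 + Real.log k)/k ≤ g*Real.exp (-(24/g))/4) :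
    ∀ b, a/(k:ℝ) ≤ b → b ≤ 1 - a/(k:ℝ) →
      EE j k a b ≤ -H a - min t0 (min (g*Real.exp (-(24/g))/4) (a/8)) := by
  have hk0 : 0 < k := by omega
  have hk2 : 2 ≤ k := by omega
  set a2 := Real.exp (-(24/g)) with ha2def
  have ha2pos : 0 < a2 := Real.exp_pos _
  set m := min t0 (min (g*a2/4) (a/8)) with hmdef
  have hm1 : m ≤ t0 := min_le_left _ _
  have hm2 : m ≤ g*a2/4 := le_trans (min_le_right _ _) (min_le_left _ _)
  have hm3 : m ≤ a/8 := le_trans (min_le_right _ _) (min_le_right _ _)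
  have half : ∀ b, a/(k:ℝ) ≤ b → b ≤ 1/2 → EE j k a b ≤ -H a - m := by
    intro b hb1 hb2
    rcases le_or_gt b (1/(k:ℝ)) with hc | hc
    · rcases le_or_gt a a2 with hsm | hsm
      · have h := EE_le_C hk hj hjk hg0 hg1 hgl hkg hk4 ha0 hsm hb1 hc
        linarith only [h, hm3]
      · have h := EE_le_B hk hk2 hj hjk ha0 ha5 hb1 hc
        -- a (j/k) log2 ≥ a2 * g * (1/2)
        have p1 : g*(1/2) ≤ ((j:ℝ)/k)*Real.log 2 := by
          have := log2_gt
          have hl0 : (0:ℝ) ≤ (j:ℝ)/k := by positivity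
          nlinarith
        have p2 : a2*(g*(1/2)) ≤ a*(((j:ℝ)/k)*Real.log 2) := by
          apply mul_le_mul hsm.le p1 (by positivity) ha0.le
        have p3 : a2*(g*(1/2)) = 2*(g*a2/4) := by ring
        linarith [h, hkc2, hm2]
    · have h := EE_le_A hk hk8 hj hjk ha0.le ha5 hc.le hb2
      linarith [hHa, hm1]
  intro b hb1 hb2
  rcases le_or_gt b (1/2) with h | h
  · exact half b hb1 h
  · rw [EE_symm hk]
    exact half (1-b) (by linarith) (by linarith)

/-- Case III assembly: δ' < a ≤ 1/2 -/
lemma caseIII {j k : ℕ} {t0 a : ℝ} (hk : Even k) (hk8 : 8 ≤ k) (hj : 0 < j) (hjk : j ≤ k)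
    (ha0 : 0 < a) (ha5 : a ≤ 1/2)
    (hH : ((j:ℝ)/k)*Real.log 2 - t0 ≤ H a)
    (hmarg : t0 + (1 + Real.log k)/k ≤ a*(((j:ℝ)/k)*Real.log 2)) :
    ∀ b, a/(k:ℝ) ≤ b → b ≤ 1 - a/(k:ℝ) →
      EE j k a b ≤ -(((j:ℝ)/k)*Real.log 2) := by
  have hk2 : 2 ≤ k := by omega
  have half : ∀ b, a/(k:ℝ) ≤ b → b ≤ 1/2 → EE j k a b ≤ -(((j:ℝ)/k)*Real.log 2) := by
    intro b hb1 hb2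
    rcases le_or_gt b (1/(k:ℝ)) with hc | hc
    · have h := EE_le_B hk hk2 hj hjk ha0 ha5 hb1 hc
      linarith only [h, hH, hmarg]
    · exact EE_le_A hk hk8 hj hjk ha0.le ha5 hc.le hb2
  intro b hb1 hb2
  rcases le_or_gt b (1/2) with h | h
  · exact half b hb1 h
  · rw [EE_symm hk]
    exact half (1-b) (by linarith) (by linarith)


lemma wub_le {j k : ℕ} {a c : ℝ} (hk0 : 0 < k) (ha0 : 0 ≤ a) (ha5 : a ≤ 1/2)
    (hbound : ∀ b, a/(k:ℝ) ≤ b → b ≤ 1 - a/(k:ℝ) → EE j k a b ≤ c) :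
    wub j k a ≤ H a + c := by
  have hkR : (1:ℝ) ≤ (k:ℝ) := by exact_mod_cast hk0
  have hmem : (1/2 : ℝ) ∈ Set.Icc (a/(k:ℝ)) (1 - a/(k:ℝ)) := by
    constructor
    · calc a/(k:ℝ) ≤ a/1 := by
            apply div_le_div_of_nonneg_left ha0 (by linarith) hkR
      _ = a := by ring
      _ ≤ 1/2 := ha5
    · have : a/(k:ℝ) ≤ 1/2 := by
        calc a/(k:ℝ) ≤ a/1 := by
              apply div_le_div_of_nonneg_left ha0 (by linarith) hkR
        _ = a := by ring
        _ ≤ 1/2 := ha5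
      linarith
  have hsup : sSup {y : ℝ | ∃ b : ℝ, b ∈ Set.Icc (a/(k:ℝ)) (1 - a/(k:ℝ)) ∧
      y = wo j k b + a * Real.log (1 - (1 - 2 * b) ^ k)
        + (1 - a) * Real.log (1 + (1 - 2 * b) ^ k) - Real.log 2} ≤ c := by
    apply csSup_le
    · exact ⟨_, 1/2, hmem, rfl⟩
    · rintro y ⟨b, hb, rfl⟩
      exact hbound b hb.1 hb.2
  unfold wub
  linarith

end Aux5


open Aux5

theorem stmt5 (R' : ℝ) (hR' : R' ∈ Set.Ico (0 : ℝ) 1) :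
    ∃ M : ℕ, 0 < M ∧
      ∀ j k : ℕ, 0 < j → j ≤ k → Even k → M < k → 1 - (j : ℝ) / k ≤ R' →
        ∃ δ' : ℝ, δ' ∈ Set.Ioo (0 : ℝ) (Hinv ((1 - (1 - (j : ℝ) / k)) * Real.log 2)) ∧
          wub j k 0 ≤ 0 ∧
          (∀ a ∈ Set.Ioc (0 : ℝ) δ', wub j k a < 0) ∧
          (∀ a ∈ Set.Ioc δ' (1 / 2 : ℝ),
            wub j k a ≤ H a - (1 - (1 - (j : ℝ) / k)) * Real.log 2) := by
  obtain ⟨hR0, hR1⟩ := hR'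
  set g := 1 - R' with hgdef
  have hg0 : 0 < g := by rw [hgdef]; linarith
  have hg1 : g ≤ 1 := by rw [hgdef]; linarith
  have hlog2 := log2_pos
  have hlog2gt := log2_gt
  have hy3 : (0:ℝ) ≤ g*Real.log 2/2 := by positivity
  have hy3' : g*Real.log 2/2 ≤ Real.log 2 := by nlinarith
  set a3 := Hinv (g*Real.log 2/2) with ha3def
  obtain ⟨ha3mem, ha3H⟩ := Hinv_spec hy3 hy3'
  rw [← ha3def] at ha3mem ha3H
  have ha3pos : 0 < a3 := by
    rw [ha3def]; exact Hinv_pos (by positivity) hy3'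
  set t0 := g*a3/4 with ht0def
  have ht0pos : 0 < t0 := by rw [ht0def]; positivity
  set a2 := Real.exp (-(24/g)) with ha2def
  have ha2pos : 0 < a2 := Real.exp_pos _
  set c0 := (g/4) * min a3 a2 with hc0def
  have hminpos : 0 < min a3 a2 := lt_min ha3pos ha2pos
  have hc0pos : 0 < c0 := by rw [hc0def]; positivity
  set Mr := max (40000:ℝ) (max (4/g) (4/c0^2)) with hMrdef
  refine ⟨Nat.ceil Mr + 1, Nat.succ_pos _, ?_⟩
  intro j k hj hjk hkeven hMk hRo
  -- k facts
  have hkMr : Mr ≤ (k:ℝ) := by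
    have h1 : Mr ≤ (Nat.ceil Mr : ℝ) := Nat.le_ceil Mr
    have h2 : ((Nat.ceil Mr + 1 : ℕ) : ℝ) ≤ (k:ℝ) := by
      exact_mod_cast Nat.le_of_lt hMk
    push_cast at h2
    linarith
  have hk40 : (40000:ℝ) ≤ (k:ℝ) := le_trans (le_max_left _ _) hkMr
  have hkg : 4/g ≤ (k:ℝ) := le_trans (le_trans (le_max_left _ _) (le_max_right _ _)) hkMr
  have hkc0 : 4/c0^2 ≤ (k:ℝ) := le_trans (le_trans (le_max_right _ _) (le_max_right _ _)) hkMr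
  have hkR : (0:ℝ) < (k:ℝ) := by linarith
  have hk8 : 8 ≤ k := by exact_mod_cast le_trans (by norm_num : (8:ℝ) ≤ 40000) hk40
  have hk0 : 0 < k := by omega
  have hhk : (1 + Real.log k)/k ≤ c0 := hk_le hc0pos hkc0 (by linarith)
  have hhk_t0 : (1 + Real.log k)/k ≤ t0 := by
    have : c0 ≤ t0 := by
      rw [hc0def, ht0def]
      have := min_le_left a3 a2
      nlinarith
    linarith
  have hhk_a2 : (1 + Real.log k)/k ≤ g*a2/4 := by
    have : c0 ≤ g*a2/4 := by
      rw [hc0def]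
      have := min_le_right a3 a2
      nlinarith
    linarith
  -- lambda facts
  have hgl : g ≤ (j:ℝ)/k := by
    rw [hgdef]; linarith
  have hl0 : (0:ℝ) < (j:ℝ)/k := by positivity
  have hl1 : (j:ℝ)/k ≤ 1 := by
    rw [div_le_one hkR]; exact_mod_cast hjk
  have ha3half : a3 ≤ 1/2 := ha3mem.2
  -- delta
  have hyd0 : (0:ℝ) < (j:ℝ)/k*Real.log 2 - t0 := by
    rw [ht0def]
    nlinarith
  have hyd1 : (j:ℝ)/k*Real.log 2 - t0 ≤ Real.log 2 := by nlinarith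
  set dl := Hinv ((j:ℝ)/k*Real.log 2 - t0) with hdldef
  obtain ⟨hdmem, hdH⟩ := Hinv_spec hyd0.le hyd1
  rw [← hdldef] at hdmem hdH
  have hdpos : 0 < dl := by
    rw [hdldef]; exact Hinv_pos hyd0 hyd1
  have hdlt : dl < Hinv ((j:ℝ)/k*Real.log 2) := by
    rw [hdldef]
    exact Hinv_lt hyd0.le (by nlinarith) (by linarith)
  have ha3dl : a3 ≤ dl := by
    by_contra hcon
    push_neg at hcon
    have hs := H_strict_mono hdmem ha3mem hcon
    rw [hdH, ha3H] at hs
    rw [ht0def] at hs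
    nlinarith
  refine ⟨dl, ⟨hdpos, by rw [show (1 - (1-(j:ℝ)/k)) = (j:ℝ)/k by ring]; exact hdlt⟩, ?_, ?_, ?_⟩
  · -- (i)
    have h := wub_le (j := j) (a := 0) (c := 0) hk0 le_rfl (by norm_num) ?_
    · rw [H_zero] at h; linarith
    · intro b hb1 hb2
      apply caseI hkeven hk8 hj hjk hg0 hgl hkg hk40 b
      · simpa using hb1
      · have : (0:ℝ)/(k:ℝ) = 0 := by simp
        rw [this] at hb2
        linarith
  · -- (ii)
    intro a ha
    obtain ⟨ha0, had⟩ := ha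
    have ha5 : a ≤ 1/2 := le_trans had hdmem.2
    have hamem : a ∈ Icc (0:ℝ) (1/2) := ⟨ha0.le, ha5⟩
    have hHa : H a ≤ ((j:ℝ)/k)*Real.log 2 - t0 := by
      have := H_mono hamem hdmem had
      rw [hdH] at this
      linarith
    set m := min t0 (min (g*a2/4) (a/8)) with hmdef
    have hmpos : 0 < m := by
      rw [hmdef]
      apply lt_min ht0pos
      apply lt_min (by positivity) (by positivity)
    have h := wub_le (j := j) hk0 ha0.le ha5
      (caseII hkeven hk8 hj hjk hg0 hg1 hgl hkg hk40 ha0 ha5 hHa hhk_a2)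
    rw [← ha2def, ← hmdef] at h
    linarith
  · -- (iii)
    intro a ha
    obtain ⟨had, ha5⟩ := ha
    have ha0 : 0 < a := lt_trans hdpos had
    have hamem : a ∈ Icc (0:ℝ) (1/2) := ⟨ha0.le, ha5⟩
    have hH : ((j:ℝ)/k)*Real.log 2 - t0 ≤ H a := by
      have := H_mono hdmem hamem had.le
      rw [hdH] at this
      linarith
    have hmarg : t0 + (1 + Real.log k)/k ≤ a*(((j:ℝ)/k)*Real.log 2) := by
      have p1 : g*(1/2) ≤ ((j:ℝ)/k)*Real.log 2 := by nlinarith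
      have p2 : a3*(g*(1/2)) ≤ a*(((j:ℝ)/k)*Real.log 2) := by
        apply mul_le_mul (by linarith) p1 (by positivity) ha0.le
      have p3 : a3*(g*(1/2)) = 2*t0 := by rw [ht0def]; ring
      linarith
    have h := wub_le (j := j) hk0 ha0.le ha5
      (caseIII hkeven hk8 hj hjk ha0 ha5 hH hmarg)
    rw [show (1 - (1-(j:ℝ)/k)) = (j:ℝ)/k by ring]
    linarith
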